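/- arXiv:1309.4028 — 4 statements merged into one kernel-verified Lean document; each statement's English description precedes it below -/
import Mathlib

section
/- Let α₁, …, αₙ be real numbers which are linearly independent over ℚ, let H₀ = Σ_{i=1}^n (αᵢ + tᵢ) pᵢqᵢ ∈ ℂ[[t,λ,q,p]], and let I ⊂ ℂ[[t,λ,q,p]] be the ideal generated by p₁q₁ − λ₁, …, pₙqₙ − λₙ. Then for every R ∈ ℂ[[t,λ,q,p]] there exist F ∈ ℂ[[t,λ,q,p]], elements a₁, …, aₙ ∈ ℂ[[t,λ]], an element S ∈ I², and an element c ∈ ℂ[[t,λ]] such that {F, H₀} + Σ_{i=1}^n aᵢ·pᵢqᵢ = R + S + c. -/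
/-!
Formalization of: rigidity of the formal normal form (Proposition on formal power series).

We work in the ring `ℂ[[t,λ,q,p]]` of formal power series in `4n` variables, realized as
`MvPowerSeries (Var n) ℂ` where `Var n = Fin n ⊕ Fin n ⊕ Fin n ⊕ Fin n` (blocks `t, λ, q, p`).
-/

open MvPowerSeries

/-- The index type for the `4n` variables `t₁,…,tₙ, λ₁,…,λₙ, q₁,…,qₙ, p₁,…,pₙ`. -/
abbrev Var (n : ℕ) : Type := Fin n ⊕ (Fin n ⊕ (Fin n ⊕ Fin n))

/-- The variable `tᵢ`. -/
def tv {n : ℕ} (i : Fin n) : Var n := Sum.inl i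
/-- The variable `λᵢ`. -/
def lv {n : ℕ} (i : Fin n) : Var n := Sum.inr (Sum.inl i)
/-- The variable `qᵢ`. -/
def qv {n : ℕ} (i : Fin n) : Var n := Sum.inr (Sum.inr (Sum.inl i))
/-- The variable `pᵢ`. -/
def pv {n : ℕ} (i : Fin n) : Var n := Sum.inr (Sum.inr (Sum.inr i))

/-- Formal partial derivative of a multivariate power series with respect to the
variable `k` : the coefficient of `x^d` in `∂f/∂x_k` is `(d k + 1)·(coefficient of
`x^(d + e_k)` in `f`). -/
noncomputable def pderiv {σ : Type} [DecidableEq σ] (k : σ) (f : MvPowerSeries σ ℂ) :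
    MvPowerSeries σ ℂ :=
  fun d => ((d k : ℂ) + 1) * MvPowerSeries.coeff (R := ℂ) (d + Finsupp.single k 1) f

/-- The Poisson bracket `{f,g} = Σᵢ (∂f/∂qᵢ ∂g/∂pᵢ − ∂g/∂qᵢ ∂f/∂pᵢ)`; the variables
`t` and `λ` are central. -/
noncomputable def poisson {n : ℕ} (f g : MvPowerSeries (Var n) ℂ) :
    MvPowerSeries (Var n) ℂ :=
  ∑ i : Fin n, (pderiv (qv i) f * pderiv (pv i) g - pderiv (qv i) g * pderiv (pv i) f)

/-- The weight of a variable: `deg tᵢ = 0`, `deg λᵢ = 2`, `deg qᵢ = deg pᵢ = 1`. -/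
def wt {n : ℕ} : Var n → ℕ
  | Sum.inl _ => 0
  | Sum.inr (Sum.inl _) => 2
  | Sum.inr (Sum.inr _) => 1

/-- The weighted degree of a monomial (exponent vector) `d`. -/
def wdeg {n : ℕ} (d : Var n →₀ ℕ) : ℕ := d.sum fun v m => m * wt v

/-- `H₀ = Σᵢ (αᵢ + tᵢ) pᵢ qᵢ`. -/
noncomputable def H0 {n : ℕ} (α : Fin n → ℝ) : MvPowerSeries (Var n) ℂ :=
  ∑ i : Fin n, (MvPowerSeries.C (σ := Var n) (R := ℂ) (α i : ℂ) + X (tv i)) * (X (pv i) * X (qv i))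

/-- A series lies in the subring `ℂ[[t,λ]]` iff every monomial containing a variable
`qᵢ` or `pᵢ` has zero coefficient. -/
def noQP {n : ℕ} (f : MvPowerSeries (Var n) ℂ) : Prop :=
  ∀ d : Var n →₀ ℕ, (∃ i : Fin n, d (qv i) ≠ 0 ∨ d (pv i) ≠ 0) →
    MvPowerSeries.coeff (R := ℂ) d f = 0

/-- The ideal `I` generated by `p₁q₁ − λ₁, …, pₙqₙ − λₙ`. -/
noncomputable def idealI (n : ℕ) : Ideal (MvPowerSeries (Var n) ℂ) :=
  Ideal.span (Set.range fun i : Fin n => X (pv i) * X (qv i) - X (lv i))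


section Infra

open MvPowerSeries Finsupp

variable {n : ℕ}

/-- exponent of `tᵢ`. -/
noncomputable def eT (i : Fin n) : Var n →₀ ℕ := Finsupp.single (tv i) 1
/-- exponent of `λᵢ`. -/
noncomputable def eL (i : Fin n) : Var n →₀ ℕ := Finsupp.single (lv i) 1
/-- exponent of `pᵢqᵢ`. -/
noncomputable def ePQ (i : Fin n) : Var n →₀ ℕ :=
  Finsupp.single (pv i) 1 + Finsupp.single (qv i) 1

/-- a monomial is "diagonal" if the `q` and `p` exponents agree. -/
def diag (d : Var n →₀ ℕ) : Prop := ∀ i : Fin n, d (qv i) = d (pv i)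

instance diag.decidable (d : Var n →₀ ℕ) : Decidable (diag d) :=
  inferInstanceAs (Decidable (∀ i : Fin n, d (qv i) = d (pv i)))

/-- a series is diagonal if supported on diagonal monomials. -/
def diagS (f : MvPowerSeries (Var n) ℂ) : Prop :=
  ∀ d, ¬ diag d → MvPowerSeries.coeff (R := ℂ) d f = 0

/-- a series has no `qᵢ` (for a fixed `i`). -/
def noQi (i : Fin n) (f : MvPowerSeries (Var n) ℂ) : Prop :=
  ∀ d, d (qv i) ≠ 0 → MvPowerSeries.coeff (R := ℂ) d f = 0

/-- the generator `pᵢqᵢ − λᵢ`. -/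
noncomputable def uu {n : ℕ} (i : Fin n) : MvPowerSeries (Var n) ℂ :=
  X (pv i) * X (qv i) - X (lv i)

@[simp] lemma tv_eq_tv {i j : Fin n} : tv i = tv j ↔ i = j := by simp [tv]
@[simp] lemma lv_eq_lv {i j : Fin n} : lv i = lv j ↔ i = j := by simp [lv]
@[simp] lemma qv_eq_qv {i j : Fin n} : qv i = qv j ↔ i = j := by simp [qv]
@[simp] lemma pv_eq_pv {i j : Fin n} : pv i = pv j ↔ i = j := by simp [pv]
@[simp] lemma tv_ne_lv {i j : Fin n} : tv i ≠ lv j := by simp [tv, lv]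
@[simp] lemma tv_ne_qv {i j : Fin n} : tv i ≠ qv j := by simp [tv, qv]
@[simp] lemma tv_ne_pv {i j : Fin n} : tv i ≠ pv j := by simp [tv, pv]
@[simp] lemma lv_ne_tv {i j : Fin n} : lv i ≠ tv j := by simp [tv, lv]
@[simp] lemma lv_ne_qv {i j : Fin n} : lv i ≠ qv j := by simp [lv, qv]
@[simp] lemma lv_ne_pv {i j : Fin n} : lv i ≠ pv j := by simp [lv, pv]
@[simp] lemma qv_ne_tv {i j : Fin n} : qv i ≠ tv j := by simp [tv, qv]
@[simp] lemma qv_ne_lv {i j : Fin n} : qv i ≠ lv j := by simp [lv, qv]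
@[simp] lemma qv_ne_pv {i j : Fin n} : qv i ≠ pv j := by simp [pv, qv]
@[simp] lemma pv_ne_tv {i j : Fin n} : pv i ≠ tv j := by simp [tv, pv]
@[simp] lemma pv_ne_lv {i j : Fin n} : pv i ≠ lv j := by simp [lv, pv]
@[simp] lemma pv_ne_qv {i j : Fin n} : pv i ≠ qv j := by simp [pv, qv]

@[simp] lemma eT_apply_tv {i j : Fin n} : eT i (tv j) = if i = j then 1 else 0 := by
  simp [eT, Finsupp.single_apply]
@[simp] lemma eT_apply_lv {i j : Fin n} : eT i (lv j) = 0 := by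
  simp [eT, Finsupp.single_apply]
@[simp] lemma eT_apply_qv {i j : Fin n} : eT i (qv j) = 0 := by
  simp [eT, Finsupp.single_apply]
@[simp] lemma eT_apply_pv {i j : Fin n} : eT i (pv j) = 0 := by
  simp [eT, Finsupp.single_apply]
@[simp] lemma eL_apply_tv {i j : Fin n} : eL i (tv j) = 0 := by
  simp [eL, Finsupp.single_apply]
@[simp] lemma eL_apply_lv {i j : Fin n} : eL i (lv j) = if i = j then 1 else 0 := by
  simp [eL, Finsupp.single_apply]
@[simp] lemma eL_apply_qv {i j : Fin n} : eL i (qv j) = 0 := by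
  simp [eL, Finsupp.single_apply]
@[simp] lemma eL_apply_pv {i j : Fin n} : eL i (pv j) = 0 := by
  simp [eL, Finsupp.single_apply]
@[simp] lemma ePQ_apply_tv {i j : Fin n} : ePQ i (tv j) = 0 := by
  simp [ePQ, Finsupp.single_apply]
@[simp] lemma ePQ_apply_lv {i j : Fin n} : ePQ i (lv j) = 0 := by
  simp [ePQ, Finsupp.single_apply]
@[simp] lemma ePQ_apply_qv {i j : Fin n} : ePQ i (qv j) = if i = j then 1 else 0 := by
  simp [ePQ, Finsupp.single_apply]
@[simp] lemma ePQ_apply_pv {i j : Fin n} : ePQ i (pv j) = if i = j then 1 else 0 := by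
  simp [ePQ, Finsupp.single_apply]

lemma XpXq_eq (i : Fin n) :
    (X (pv i) * X (qv i) : MvPowerSeries (Var n) ℂ) = monomial (R := ℂ) (ePQ i) 1 := by
  rw [X_def, X_def, monomial_mul_monomial, mul_one]; rfl

lemma coeff_mul_XpXq (g : MvPowerSeries (Var n) ℂ) (i : Fin n) (d : Var n →₀ ℕ) :
    MvPowerSeries.coeff (R := ℂ) d (g * (X (pv i) * X (qv i))) =
      if d (qv i) ≠ 0 ∧ d (pv i) ≠ 0 then MvPowerSeries.coeff (R := ℂ) (d - ePQ i) g else 0 := by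
  rw [XpXq_eq, coeff_mul_monomial]
  have : ePQ i ≤ d ↔ d (qv i) ≠ 0 ∧ d (pv i) ≠ 0 := by
    constructor
    · intro h
      have hq := h (qv i)
      have hp := h (pv i)
      simp at hq hp
      omega
    · rintro ⟨hq, hp⟩ v
      rcases v with j | j | j | j
      · show ePQ i (tv j) ≤ _; simp
      · show ePQ i (lv j) ≤ _; simp
      · show ePQ i (qv j) ≤ d (qv j)
        rcases eq_or_ne i j with h | h
        · subst h; simpa using Nat.one_le_iff_ne_zero.2 hq
        · simp [h]
      · show ePQ i (pv j) ≤ d (pv j)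
        rcases eq_or_ne i j with h | h
        · subst h; simpa using Nat.one_le_iff_ne_zero.2 hp
        · simp [h]
  by_cases h : ePQ i ≤ d
  · rw [if_pos h, if_pos (this.1 h), mul_one]
  · rw [if_neg h, if_neg (fun hc => h (this.2 hc))]

lemma coeff_mul_Xl (g : MvPowerSeries (Var n) ℂ) (i : Fin n) (d : Var n →₀ ℕ) :
    MvPowerSeries.coeff (R := ℂ) d (g * X (lv i)) =
      if d (lv i) ≠ 0 then MvPowerSeries.coeff (R := ℂ) (d - eL i) g else 0 := by
  rw [X_def, coeff_mul_monomial]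
  have : Finsupp.single (lv i) 1 ≤ d ↔ d (lv i) ≠ 0 := by
    rw [Finsupp.single_le_iff]; omega
  by_cases h : d (lv i) ≠ 0
  · rw [if_pos (this.2 h), if_pos h, mul_one]; rfl
  · rw [if_neg (fun hc => h (this.1 hc)), if_neg h]

end Infra

section Part1

open MvPowerSeries

variable {n : ℕ}

lemma coeff_pderiv (k : Var n) (f : MvPowerSeries (Var n) ℂ) (d : Var n →₀ ℕ) :
    MvPowerSeries.coeff (R := ℂ) d (pderiv k f) =
      ((d k : ℂ) + 1) * MvPowerSeries.coeff (R := ℂ) (d + Finsupp.single k 1) f := rfl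

lemma pderiv_monomial (k : Var n) (m : Var n →₀ ℕ) (a : ℂ) :
    pderiv k (monomial (R := ℂ) m a) =
      monomial (R := ℂ) (m - Finsupp.single k 1) ((m k : ℂ) * a) := by
  apply MvPowerSeries.ext; intro d
  rw [coeff_pderiv, coeff_monomial, coeff_monomial]
  by_cases h : d + Finsupp.single k 1 = m
  · have hk : m k = d k + 1 := by
      rw [← h]; simp [Finsupp.add_apply, Finsupp.single_apply]
    have hd : d = m - Finsupp.single k 1 := by
      rw [← h]; ext v
      simp only [Finsupp.tsub_apply, Finsupp.add_apply, Finsupp.single_apply]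
      omega
    rw [if_pos h, if_pos hd, hk]
    push_cast; ring
  · rw [if_neg h, mul_zero]
    by_cases h2 : d = m - Finsupp.single k 1
    · have hm : m k = 0 := by
        by_contra hm
        apply h; ext v
        have h2v : d v = m v - Finsupp.single k 1 v := by rw [h2, Finsupp.tsub_apply]
        simp only [Finsupp.add_apply, Finsupp.single_apply]
        rcases eq_or_ne k v with rfl | hkv
        · have h2v : d k = m k - 1 := by
            rw [h2]; simp [Finsupp.tsub_apply, Finsupp.single_apply]
          simp [h2v]; omega
        · have h2v : d v = m v := by
            rw [h2]; simp [Finsupp.tsub_apply, Finsupp.single_apply, hkv]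
          simp [hkv, h2v]
      rw [if_pos h2, hm]; simp
    · rw [if_neg h2]

lemma pderiv_add (k : Var n) (f g : MvPowerSeries (Var n) ℂ) :
    pderiv k (f + g) = pderiv k f + pderiv k g := by
  apply MvPowerSeries.ext; intro d
  simp only [coeff_pderiv, map_add]; ring

lemma pderiv_sum {ι : Type*} (k : Var n) (s : Finset ι) (f : ι → MvPowerSeries (Var n) ℂ) :
    pderiv k (∑ i ∈ s, f i) = ∑ i ∈ s, pderiv k (f i) := by
  induction s using Finset.cons_induction with
  | empty =>
    apply MvPowerSeries.ext; intro d
    simp [coeff_pderiv]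
  | cons a s ha ih =>
    rw [Finset.sum_cons, Finset.sum_cons, pderiv_add, ih]

lemma H0_eq (α : Fin n → ℝ) :
    H0 α = ∑ i : Fin n, (monomial (R := ℂ) (ePQ i) ((α i : ℂ)) + monomial (R := ℂ) (eT i + ePQ i) 1) := by
  unfold H0
  apply Finset.sum_congr rfl
  intro i _
  rw [add_mul, XpXq_eq]
  congr 1
  · have hC : (MvPowerSeries.C (σ := Var n) (R := ℂ) ((α i : ℂ))) = monomial (R := ℂ) 0 ((α i : ℂ)) := rfl
    rw [hC, monomial_mul_monomial, zero_add, mul_one]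
  · rw [X_def, monomial_mul_monomial, one_mul]; rfl

lemma pderiv_pv_H0 (α : Fin n → ℝ) (i : Fin n) :
    pderiv (pv i) (H0 α) =
      monomial (R := ℂ) (Finsupp.single (qv i) 1) ((α i : ℂ)) +
        monomial (R := ℂ) (eT i + Finsupp.single (qv i) 1) 1 := by
  rw [H0_eq, pderiv_sum]
  rw [Finset.sum_eq_single i]
  · have e1 : ePQ i - Finsupp.single (pv i) 1 = Finsupp.single (qv i) 1 := by
      ext v; rcases v with j | j | j | j <;>
        simp [ePQ, tv, lv, qv, pv, Finsupp.tsub_apply, Finsupp.add_apply,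
          Finsupp.single_apply]
    have e2 : (eT i + ePQ i) - Finsupp.single (pv i) 1
        = eT i + Finsupp.single (qv i) 1 := by
      ext v; rcases v with j | j | j | j <;>
        simp [ePQ, eT, tv, lv, qv, pv, Finsupp.tsub_apply, Finsupp.add_apply,
          Finsupp.single_apply]
    have e3 : (ePQ i) (pv i) = 1 := by simp
    have e4 : (eT i + ePQ i) (pv i) = 1 := by simp [Finsupp.add_apply]
    rw [pderiv_add, pderiv_monomial, pderiv_monomial, e1, e2, e3, e4]
    push_cast; simp
  · intro j _ hj
    rw [pderiv_add, pderiv_monomial, pderiv_monomial]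
    have h1 : (ePQ j) (pv i) = 0 := by simp [hj]
    have h2 : (eT j + ePQ j) (pv i) = 0 := by
      simp [Finsupp.add_apply, hj]
    rw [h1, h2]; push_cast; simp
  · intro h; exact absurd (Finset.mem_univ i) h

lemma pderiv_qv_H0 (α : Fin n → ℝ) (i : Fin n) :
    pderiv (qv i) (H0 α) =
      monomial (R := ℂ) (Finsupp.single (pv i) 1) ((α i : ℂ)) +
        monomial (R := ℂ) (eT i + Finsupp.single (pv i) 1) 1 := by
  rw [H0_eq, pderiv_sum]
  rw [Finset.sum_eq_single i]
  · have e1 : ePQ i - Finsupp.single (qv i) 1 = Finsupp.single (pv i) 1 := by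
      ext v; rcases v with j | j | j | j <;>
        simp [ePQ, tv, lv, qv, pv, Finsupp.tsub_apply, Finsupp.add_apply,
          Finsupp.single_apply]
    have e2 : (eT i + ePQ i) - Finsupp.single (qv i) 1
        = eT i + Finsupp.single (pv i) 1 := by
      ext v; rcases v with j | j | j | j <;>
        simp [ePQ, eT, tv, lv, qv, pv, Finsupp.tsub_apply, Finsupp.add_apply,
          Finsupp.single_apply]
    have e3 : (ePQ i) (qv i) = 1 := by simp
    have e4 : (eT i + ePQ i) (qv i) = 1 := by simp [Finsupp.add_apply]
    rw [pderiv_add, pderiv_monomial, pderiv_monomial, e1, e2, e3, e4]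
    push_cast; simp
  · intro j _ hj
    rw [pderiv_add, pderiv_monomial, pderiv_monomial]
    have h1 : (ePQ j) (qv i) = 0 := by simp [hj]
    have h2 : (eT j + ePQ j) (qv i) = 0 := by
      simp [Finsupp.add_apply, hj]
    rw [h1, h2]; push_cast; simp
  · intro h; exact absurd (Finset.mem_univ i) h

end Part1

section Part1b

open MvPowerSeries

variable {n : ℕ}

/-- total degree in the `t` variables. -/
def Tdeg (d : Var n →₀ ℕ) : ℕ := ∑ i : Fin n, d (tv i)

/-- the "small denominator" `Σ (dqᵢ − dpᵢ) αᵢ`, as a complex number. -/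
noncomputable def nuC (α : Fin n → ℝ) (d : Var n →₀ ℕ) : ℂ :=
  ∑ i : Fin n, ((d (qv i) : ℂ) - (d (pv i) : ℂ)) * (α i : ℂ)

lemma nuC_ne_zero {α : Fin n → ℝ} (hα : LinearIndependent ℚ α) (d : Var n →₀ ℕ)
    (hd : ¬ diag d) : nuC α d ≠ 0 := by
  intro h0
  have hR : ∑ i : Fin n, (((d (qv i) : ℝ) - (d (pv i) : ℝ)) * α i) = 0 := by
    have : ((∑ i : Fin n, (((d (qv i) : ℝ) - (d (pv i) : ℝ)) * α i) : ℝ) : ℂ) = 0 := by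
      rw [← h0]; unfold nuC; push_cast; ring
    exact_mod_cast this
  rw [Fintype.linearIndependent_iff] at hα
  have := hα (fun i => ((d (qv i) : ℚ) - (d (pv i) : ℚ)))
  have hz : ∀ i, ((d (qv i) : ℚ) - (d (pv i) : ℚ)) = 0 := by
    apply this
    rw [← hR]
    apply Finset.sum_congr rfl
    intro i _
    rw [Rat.smul_def]
    push_cast
    ring
  apply hd
  intro i
  have := hz i
  have : ((d (qv i) : ℚ)) = ((d (pv i) : ℚ)) := by linarith
  exact_mod_cast this

/-- coefficients of `F`, by recursion on the `t`-degree. -/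
noncomputable def FC (α : Fin n → ℝ) (R : MvPowerSeries (Var n) ℂ) :
    ℕ → (Var n →₀ ℕ) → ℂ
  | 0 => fun d => if diag d then 0 else (nuC α d)⁻¹ * MvPowerSeries.coeff (R := ℂ) d R
  | (N+1) => fun d => if diag d then 0 else (nuC α d)⁻¹ *
      (MvPowerSeries.coeff (R := ℂ) d R -
        ∑ i : Fin n, ((d (qv i) : ℂ) - (d (pv i) : ℂ)) *
          (if d (tv i) = 0 then 0 else FC α R N (d - eT i)))

lemma Tdeg_sub_eT {d : Var n →₀ ℕ} {i : Fin n} (h : d (tv i) ≠ 0) :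
    Tdeg (d - eT i) + 1 = Tdeg d := by
  unfold Tdeg
  rw [Finset.sum_eq_sum_sdiff_singleton_add (Finset.mem_univ i),
    Finset.sum_eq_sum_sdiff_singleton_add (Finset.mem_univ i) (fun j => d (tv j))]
  have h1 : ∀ j ∈ Finset.univ \ {i}, (d - eT i) (tv j) = d (tv j) := by
    intro j hj
    simp only [Finset.mem_sdiff, Finset.mem_singleton] at hj
    have : eT i (tv j) = 0 := by
      rw [eT_apply_tv, if_neg (fun hc => hj.2 hc.symm)]
    simp [Finsupp.tsub_apply, this]
  rw [Finset.sum_congr rfl h1]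
  have h2 : (d - eT i) (tv i) = d (tv i) - 1 := by
    simp [Finsupp.tsub_apply]
  rw [h2]
  omega

lemma FC_succ (α : Fin n → ℝ) (R : MvPowerSeries (Var n) ℂ) :
    ∀ N (d : Var n →₀ ℕ), Tdeg d ≤ N → FC α R (N+1) d = FC α R N d := by
  intro N
  induction N with
  | zero =>
    intro d hd
    have h0 : ∀ i, d (tv i) = 0 := by
      intro i
      have hT : Tdeg d = 0 := Nat.le_zero.1 hd
      unfold Tdeg at hT
      exact Finset.sum_eq_zero_iff.1 hT i (Finset.mem_univ i)
    simp [FC, h0]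
  | succ N ih =>
    intro d hd
    show (if diag d then 0 else _) = (if diag d then 0 else _)
    by_cases hdg : diag d
    · rw [if_pos hdg, if_pos hdg]
    · rw [if_neg hdg, if_neg hdg]
      have hterm : ∀ i : Fin n,
          (if d (tv i) = 0 then (0:ℂ) else FC α R (N+1) (d - eT i)) =
          (if d (tv i) = 0 then 0 else FC α R N (d - eT i)) := by
        intro i
        by_cases h : d (tv i) = 0
        · rw [if_pos h, if_pos h]
        · rw [if_neg h, if_neg h, ih]
          have := Tdeg_sub_eT h
          omega
      simp only [hterm]

/-- the series `F` solving the homological equation off the diagonal. -/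
noncomputable def Fser (α : Fin n → ℝ) (R : MvPowerSeries (Var n) ℂ) :
    MvPowerSeries (Var n) ℂ := fun d => FC α R (Tdeg d) d

lemma coeff_Fser (α : Fin n → ℝ) (R : MvPowerSeries (Var n) ℂ) (d : Var n →₀ ℕ) :
    MvPowerSeries.coeff (R := ℂ) d (Fser α R) = FC α R (Tdeg d) d := rfl

lemma FC_eq_Fser (α : Fin n → ℝ) (R : MvPowerSeries (Var n) ℂ) :
    ∀ N (d : Var n →₀ ℕ), Tdeg d ≤ N →
      FC α R N d = MvPowerSeries.coeff (R := ℂ) d (Fser α R) := by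
  intro N
  induction N with
  | zero =>
    intro d hd
    rw [coeff_Fser, Nat.le_zero.1 hd]
  | succ N ih =>
    intro d hd
    rcases Nat.lt_or_ge (Tdeg d) (N+1) with h | h
    · rw [FC_succ α R N d (by omega), ih d (by omega)]
    · have : Tdeg d = N + 1 := by omega
      rw [coeff_Fser, this]

lemma Fser_diag {α : Fin n → ℝ} {R : MvPowerSeries (Var n) ℂ} {d : Var n →₀ ℕ}
    (hd : diag d) : MvPowerSeries.coeff (R := ℂ) d (Fser α R) = 0 := by
  rw [coeff_Fser]
  cases h : Tdeg d <;> simp [FC, hd]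

lemma Fser_rec {α : Fin n → ℝ} (hα : LinearIndependent ℚ α)
    (R : MvPowerSeries (Var n) ℂ) {d : Var n →₀ ℕ} (hd : ¬ diag d) :
    nuC α d * MvPowerSeries.coeff (R := ℂ) d (Fser α R) =
      MvPowerSeries.coeff (R := ℂ) d R -
        ∑ i : Fin n, ((d (qv i) : ℂ) - (d (pv i) : ℂ)) *
          (if d (tv i) = 0 then 0
            else MvPowerSeries.coeff (R := ℂ) (d - eT i) (Fser α R)) := by
  have hnu := nuC_ne_zero hα d hd
  have h1 : MvPowerSeries.coeff (R := ℂ) d (Fser α R) = FC α R (Tdeg d + 1) d := by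
    rw [coeff_Fser, FC_succ α R (Tdeg d) d le_rfl]
  rw [h1]
  show nuC α d * (if diag d then 0 else _) = _
  rw [if_neg hd, ← mul_assoc, mul_inv_cancel₀ hnu, one_mul]
  congr 1
  apply Finset.sum_congr rfl
  intro i _
  by_cases h : d (tv i) = 0
  · rw [if_pos h, if_pos h]
  · rw [if_neg h, if_neg h, FC_eq_Fser]
    have := Tdeg_sub_eT h
    omega

end Part1b

section Part1c

open MvPowerSeries

variable {n : ℕ}

lemma single_q_le_iff {i : Fin n} {d : Var n →₀ ℕ} :
    Finsupp.single (qv i) 1 ≤ d ↔ d (qv i) ≠ 0 := by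
  rw [Finsupp.single_le_iff]; omega

lemma single_p_le_iff {i : Fin n} {d : Var n →₀ ℕ} :
    Finsupp.single (pv i) 1 ≤ d ↔ d (pv i) ≠ 0 := by
  rw [Finsupp.single_le_iff]; omega

lemma eT_single_q_le_iff {i : Fin n} {d : Var n →₀ ℕ} :
    eT i + Finsupp.single (qv i) 1 ≤ d ↔ (d (tv i) ≠ 0 ∧ d (qv i) ≠ 0) := by
  constructor
  · intro h
    have h1 := Finsupp.le_def.1 h (tv i)
    have h2 := Finsupp.le_def.1 h (qv i)
    simp [Finsupp.add_apply, Finsupp.single_apply] at h1 h2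
    omega
  · rintro ⟨h1, h2⟩
    rw [Finsupp.le_def]
    intro v
    rcases eq_or_ne v (tv i) with rfl | hv1
    · simp [Finsupp.add_apply, eT, Finsupp.single_apply]
      omega
    · rcases eq_or_ne v (qv i) with rfl | hv2
      · simp [Finsupp.add_apply, eT, Finsupp.single_apply]
        omega
      · have hz1 : (eT i) v = 0 := by
          simp [eT, Finsupp.single_apply, Ne.symm hv1]
        have hz2 : (Finsupp.single (qv i) 1 : Var n →₀ ℕ) v = 0 := by
          simp [Finsupp.single_apply, Ne.symm hv2]
        simp [Finsupp.add_apply, hz1, hz2]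

lemma eT_single_p_le_iff {i : Fin n} {d : Var n →₀ ℕ} :
    eT i + Finsupp.single (pv i) 1 ≤ d ↔ (d (tv i) ≠ 0 ∧ d (pv i) ≠ 0) := by
  constructor
  · intro h
    have h1 := Finsupp.le_def.1 h (tv i)
    have h2 := Finsupp.le_def.1 h (pv i)
    simp [Finsupp.add_apply, Finsupp.single_apply] at h1 h2
    omega
  · rintro ⟨h1, h2⟩
    rw [Finsupp.le_def]
    intro v
    rcases eq_or_ne v (tv i) with rfl | hv1
    · simp [Finsupp.add_apply, eT, Finsupp.single_apply]
      omega
    · rcases eq_or_ne v (pv i) with rfl | hv2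
      · simp [Finsupp.add_apply, eT, Finsupp.single_apply]
        omega
      · have hz1 : (eT i) v = 0 := by
          simp [eT, Finsupp.single_apply, Ne.symm hv1]
        have hz2 : (Finsupp.single (pv i) 1 : Var n →₀ ℕ) v = 0 := by
          simp [Finsupp.single_apply, Ne.symm hv2]
        simp [Finsupp.add_apply, hz1, hz2]

lemma coeff_q_term (α : Fin n → ℝ) (F : MvPowerSeries (Var n) ℂ) (i : Fin n)
    (d : Var n →₀ ℕ) :
    MvPowerSeries.coeff (R := ℂ) d (pderiv (qv i) F * pderiv (pv i) (H0 α)) =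
      (d (qv i) : ℂ) * ((α i : ℂ) * MvPowerSeries.coeff (R := ℂ) d F +
        (if d (tv i) = 0 then 0 else MvPowerSeries.coeff (R := ℂ) (d - eT i) F)) := by
  rw [pderiv_pv_H0, mul_add, map_add, coeff_mul_monomial, coeff_mul_monomial]
  by_cases hq : d (qv i) = 0
  · rw [if_neg (fun hc => (single_q_le_iff.1 hc) hq),
      if_neg (fun hc => (eT_single_q_le_iff.1 hc).2 hq)]
    simp [hq]
  · have hq1 : 1 ≤ d (qv i) := Nat.one_le_iff_ne_zero.2 hq
    have e5 : (d - Finsupp.single (qv i) 1 : Var n →₀ ℕ) (qv i) = d (qv i) - 1 := by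
      simp [Finsupp.tsub_apply, Finsupp.single_apply]
    have e6 : (d - Finsupp.single (qv i) 1) + Finsupp.single (qv i) 1 = d :=
      tsub_add_cancel_of_le (single_q_le_iff.2 hq)
    have hcast : (((d (qv i) - 1 : ℕ) : ℂ) + 1) = ((d (qv i) : ℕ) : ℂ) := by
      push_cast [Nat.cast_sub hq1]; ring
    rw [if_pos (single_q_le_iff.2 hq), coeff_pderiv, e5, e6, hcast]
    by_cases ht : d (tv i) = 0
    · rw [if_neg (fun hc => (eT_single_q_le_iff.1 hc).1 ht), if_pos ht]
      ring
    · have hle : Finsupp.single (qv i) 1 ≤ d - eT i := by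
        rw [Finsupp.single_le_iff]
        have : (d - eT i : Var n →₀ ℕ) (qv i) = d (qv i) := by
          simp [Finsupp.tsub_apply]
        omega
      have e7 : (d - (eT i + Finsupp.single (qv i) 1) : Var n →₀ ℕ) (qv i)
          = d (qv i) - 1 := by
        simp [Finsupp.tsub_apply, Finsupp.add_apply, Finsupp.single_apply]
      have e8 : (d - (eT i + Finsupp.single (qv i) 1)) + Finsupp.single (qv i) 1
          = d - eT i := by
        rw [tsub_add_eq_tsub_tsub, tsub_add_cancel_of_le hle]
      rw [if_pos (eT_single_q_le_iff.2 ⟨ht, hq⟩), if_neg ht, coeff_pderiv, e7, e8,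
        hcast]
      ring

lemma coeff_p_term (α : Fin n → ℝ) (F : MvPowerSeries (Var n) ℂ) (i : Fin n)
    (d : Var n →₀ ℕ) :
    MvPowerSeries.coeff (R := ℂ) d (pderiv (qv i) (H0 α) * pderiv (pv i) F) =
      (d (pv i) : ℂ) * ((α i : ℂ) * MvPowerSeries.coeff (R := ℂ) d F +
        (if d (tv i) = 0 then 0 else MvPowerSeries.coeff (R := ℂ) (d - eT i) F)) := by
  rw [pderiv_qv_H0, add_mul, map_add, mul_comm _ (pderiv (pv i) F),
    mul_comm _ (pderiv (pv i) F), coeff_mul_monomial, coeff_mul_monomial]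
  by_cases hp : d (pv i) = 0
  · rw [if_neg (fun hc => (single_p_le_iff.1 hc) hp),
      if_neg (fun hc => (eT_single_p_le_iff.1 hc).2 hp)]
    simp [hp]
  · have hp1 : 1 ≤ d (pv i) := Nat.one_le_iff_ne_zero.2 hp
    have e5 : (d - Finsupp.single (pv i) 1 : Var n →₀ ℕ) (pv i) = d (pv i) - 1 := by
      simp [Finsupp.tsub_apply, Finsupp.single_apply]
    have e6 : (d - Finsupp.single (pv i) 1) + Finsupp.single (pv i) 1 = d :=
      tsub_add_cancel_of_le (single_p_le_iff.2 hp)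
    have hcast : (((d (pv i) - 1 : ℕ) : ℂ) + 1) = ((d (pv i) : ℕ) : ℂ) := by
      push_cast [Nat.cast_sub hp1]; ring
    rw [if_pos (single_p_le_iff.2 hp), coeff_pderiv, e5, e6, hcast]
    by_cases ht : d (tv i) = 0
    · rw [if_neg (fun hc => (eT_single_p_le_iff.1 hc).1 ht), if_pos ht]
      ring
    · have hle : Finsupp.single (pv i) 1 ≤ d - eT i := by
        rw [Finsupp.single_le_iff]
        have : (d - eT i : Var n →₀ ℕ) (pv i) = d (pv i) := by
          simp [Finsupp.tsub_apply]
        omega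
      have e7 : (d - (eT i + Finsupp.single (pv i) 1) : Var n →₀ ℕ) (pv i)
          = d (pv i) - 1 := by
        simp [Finsupp.tsub_apply, Finsupp.add_apply, Finsupp.single_apply]
      have e8 : (d - (eT i + Finsupp.single (pv i) 1)) + Finsupp.single (pv i) 1
          = d - eT i := by
        rw [tsub_add_eq_tsub_tsub, tsub_add_cancel_of_le hle]
      rw [if_pos (eT_single_p_le_iff.2 ⟨ht, hp⟩), if_neg ht, coeff_pderiv, e7, e8,
        hcast]
      ring

lemma coeff_poisson_H0 (α : Fin n → ℝ) (F : MvPowerSeries (Var n) ℂ)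
    (d : Var n →₀ ℕ) :
    MvPowerSeries.coeff (R := ℂ) d (poisson F (H0 α)) =
      ∑ i : Fin n, ((d (qv i) : ℂ) - (d (pv i) : ℂ)) *
        ((α i : ℂ) * MvPowerSeries.coeff (R := ℂ) d F +
          (if d (tv i) = 0 then 0 else MvPowerSeries.coeff (R := ℂ) (d - eT i) F)) := by
  unfold poisson
  rw [map_sum]
  apply Finset.sum_congr rfl
  intro i _
  rw [map_sub, coeff_q_term, coeff_p_term]
  ring

/-- the off-diagonal part of `R`. -/
noncomputable def Roff (R : MvPowerSeries (Var n) ℂ) : MvPowerSeries (Var n) ℂ :=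
  fun d => if diag d then 0 else MvPowerSeries.coeff (R := ℂ) d R

lemma coeff_Roff (R : MvPowerSeries (Var n) ℂ) (d : Var n →₀ ℕ) :
    MvPowerSeries.coeff (R := ℂ) d (Roff R) = if diag d then 0 else MvPowerSeries.coeff (R := ℂ) d R :=
  rfl

lemma poisson_Fser {α : Fin n → ℝ} (hα : LinearIndependent ℚ α)
    (R : MvPowerSeries (Var n) ℂ) :
    poisson (Fser α R) (H0 α) = Roff R := by
  apply MvPowerSeries.ext
  intro d
  rw [coeff_poisson_H0, coeff_Roff]
  by_cases hd : diag d
  · rw [if_pos hd]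
    apply Finset.sum_eq_zero
    intro i _
    rw [hd i]
    ring
  · rw [if_neg hd]
    have expand : ∀ i : Fin n, ((d (qv i) : ℂ) - (d (pv i) : ℂ)) *
        ((α i : ℂ) * MvPowerSeries.coeff (R := ℂ) d (Fser α R) +
          (if d (tv i) = 0 then 0
            else MvPowerSeries.coeff (R := ℂ) (d - eT i) (Fser α R))) =
        ((d (qv i) : ℂ) - (d (pv i) : ℂ)) * (α i : ℂ) *
            MvPowerSeries.coeff (R := ℂ) d (Fser α R) +
          ((d (qv i) : ℂ) - (d (pv i) : ℂ)) *
            (if d (tv i) = 0 then 0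
              else MvPowerSeries.coeff (R := ℂ) (d - eT i) (Fser α R)) := by
      intro i; ring
    rw [Finset.sum_congr rfl (fun i _ => expand i), Finset.sum_add_distrib,
      ← Finset.sum_mul]
    have : (∑ i : Fin n, ((d (qv i) : ℂ) - (d (pv i) : ℂ)) * (α i : ℂ)) =
        nuC α d := rfl
    rw [this, Fser_rec hα R hd]
    ring

end Part1c

section Part2

open MvPowerSeries

variable {n : ℕ}

/-- division of a diagonal series by `pᵢqᵢ − λᵢ` (quotient). -/
noncomputable def dv (i : Fin n) (f : MvPowerSeries (Var n) ℂ) :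
    MvPowerSeries (Var n) ℂ :=
  fun d => if diag d then
    ∑ x ∈ Finset.range (d (lv i) + 1),
      MvPowerSeries.coeff (R := ℂ) (d - x • eL i + (x+1) • ePQ i) f
  else 0

/-- the remainder of the division. -/
noncomputable def rv (i : Fin n) (f : MvPowerSeries (Var n) ℂ) :
    MvPowerSeries (Var n) ℂ := f - dv i f * uu i

lemma coeff_dv (i : Fin n) (f : MvPowerSeries (Var n) ℂ) (d : Var n →₀ ℕ) :
    MvPowerSeries.coeff (R := ℂ) d (dv i f) = if diag d then
      ∑ x ∈ Finset.range (d (lv i) + 1),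
        MvPowerSeries.coeff (R := ℂ) (d - x • eL i + (x+1) • ePQ i) f
    else 0 := rfl

lemma diagS_dv (i : Fin n) (f : MvPowerSeries (Var n) ℂ) : diagS (dv i f) :=
  fun d hd => by rw [coeff_dv, if_neg hd]

lemma diag_sub_ePQ {d : Var n →₀ ℕ} {i : Fin n} (hd : diag d) : diag (d - ePQ i) := by
  intro j
  simp only [Finsupp.tsub_apply, ePQ_apply_qv, ePQ_apply_pv]
  rw [hd j]

lemma diag_sub_eL {d : Var n →₀ ℕ} {i : Fin n} (hd : diag d) : diag (d - eL i) := by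
  intro j
  simp only [Finsupp.tsub_apply, eL_apply_qv, eL_apply_pv]
  rw [hd j]

lemma ndiag_sub_ePQ {d : Var n →₀ ℕ} {i : Fin n} (hq : d (qv i) ≠ 0)
    (hp : d (pv i) ≠ 0) (hd : ¬ diag d) : ¬ diag (d - ePQ i) := by
  intro hc
  apply hd
  intro j
  have hcj := hc j
  simp only [Finsupp.tsub_apply, ePQ_apply_qv, ePQ_apply_pv] at hcj
  rcases eq_or_ne i j with rfl | hij
  · simp at hcj; omega
  · simpa [if_neg hij] using hcj

lemma ndiag_sub_eL {d : Var n →₀ ℕ} {i : Fin n} (hd : ¬ diag d) :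
    ¬ diag (d - eL i) := by
  intro hc
  apply hd
  intro j
  have hcj := hc j
  simpa only [Finsupp.tsub_apply, eL_apply_qv, eL_apply_pv, Nat.sub_zero] using hcj

lemma shift_eq1 (i : Fin n) (d : Var n →₀ ℕ) (x : ℕ) (hq : d (qv i) ≠ 0)
    (hp : d (pv i) ≠ 0) :
    d - ePQ i - x • eL i + (x+1) • ePQ i = d - x • eL i + x • ePQ i := by
  ext v
  simp only [Finsupp.add_apply, Finsupp.tsub_apply, Finsupp.smul_apply, smul_eq_mul]
  rcases eq_or_ne v (qv i) with rfl | hvq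
  · have h1 : ePQ i (qv i) = 1 := by simp
    have h2 : eL i (qv i) = 0 := by simp
    simp only [h1, h2, mul_zero, mul_one]
    omega
  rcases eq_or_ne v (pv i) with rfl | hvp
  · have h1 : ePQ i (pv i) = 1 := by simp
    have h2 : eL i (pv i) = 0 := by simp
    simp only [h1, h2, mul_zero, mul_one]
    omega
  rcases eq_or_ne v (lv i) with rfl | hvl
  · have h1 : ePQ i (lv i) = 0 := by simp
    have h2 : eL i (lv i) = 1 := by simp
    simp only [h1, h2, mul_zero, mul_one]
    omega
  · have h1 : eL i v = 0 := by
      simp [eL, Finsupp.single_apply, Ne.symm hvl]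
    have h2 : ePQ i v = 0 := by
      simp [ePQ, Finsupp.single_apply, Ne.symm hvq, Ne.symm hvp]
    simp [h1, h2]

lemma shift_eq2 (i : Fin n) (d : Var n →₀ ℕ) (x : ℕ) :
    d - eL i - x • eL i + (x+1) • ePQ i = d - (x+1) • eL i + (x+1) • ePQ i := by
  ext v
  simp only [Finsupp.add_apply, Finsupp.tsub_apply, Finsupp.smul_apply, smul_eq_mul]
  rcases eq_or_ne v (qv i) with rfl | hvq
  · have h1 : ePQ i (qv i) = 1 := by simp
    have h2 : eL i (qv i) = 0 := by simp
    simp only [h1, h2, mul_zero, mul_one]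
    omega
  rcases eq_or_ne v (pv i) with rfl | hvp
  · have h1 : ePQ i (pv i) = 1 := by simp
    have h2 : eL i (pv i) = 0 := by simp
    simp only [h1, h2, mul_zero, mul_one]
    omega
  rcases eq_or_ne v (lv i) with rfl | hvl
  · have h1 : ePQ i (lv i) = 0 := by simp
    have h2 : eL i (lv i) = 1 := by simp
    simp only [h1, h2, mul_zero, mul_one]
    omega
  · have h1 : eL i v = 0 := by
      simp [eL, Finsupp.single_apply, Ne.symm hvl]
    have h2 : ePQ i v = 0 := by
      simp [ePQ, Finsupp.single_apply, Ne.symm hvq, Ne.symm hvp]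
    simp [h1, h2]

lemma shift_apply_qv (i i' : Fin n) (hne : i' ≠ i) (d e : Var n →₀ ℕ) (x y : ℕ) :
    (d - e - x • eL i + y • ePQ i : Var n →₀ ℕ) (qv i') = d (qv i') - e (qv i') := by
  have hnee : ¬ (i = i') := Ne.symm hne
  simp [Finsupp.add_apply, Finsupp.tsub_apply, Finsupp.smul_apply, hnee]

lemma coeff_rv (i : Fin n) (f : MvPowerSeries (Var n) ℂ) (d : Var n →₀ ℕ) :
    MvPowerSeries.coeff (R := ℂ) d (rv i f) =
      MvPowerSeries.coeff (R := ℂ) d f -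
        (if d (qv i) ≠ 0 ∧ d (pv i) ≠ 0 then
          MvPowerSeries.coeff (R := ℂ) (d - ePQ i) (dv i f) else 0) +
        (if d (lv i) ≠ 0 then MvPowerSeries.coeff (R := ℂ) (d - eL i) (dv i f) else 0) := by
  rw [rv, map_sub]
  have : dv i f * uu i = dv i f * (X (pv i) * X (qv i)) - dv i f * X (lv i) := by
    rw [uu, mul_sub]
  rw [this, map_sub, coeff_mul_XpXq, coeff_mul_Xl]
  ring

lemma diagS_rv {f : MvPowerSeries (Var n) ℂ} (hf : diagS f) (i : Fin n) :
    diagS (rv i f) := by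
  intro d hd
  rw [coeff_rv, hf d hd]
  have h1 : (if d (qv i) ≠ 0 ∧ d (pv i) ≠ 0 then
      MvPowerSeries.coeff (R := ℂ) (d - ePQ i) (dv i f) else 0) = 0 := by
    split_ifs with h
    · rw [coeff_dv, if_neg (ndiag_sub_ePQ h.1 h.2 hd)]
    · rfl
  have h2 : (if d (lv i) ≠ 0 then MvPowerSeries.coeff (R := ℂ) (d - eL i) (dv i f) else 0)
      = 0 := by
    split_ifs with h
    · rw [coeff_dv, if_neg (ndiag_sub_eL hd)]
    · rfl
  rw [h1, h2]
  ring

lemma noQi_rv_self {f : MvPowerSeries (Var n) ℂ} (hf : diagS f) (i : Fin n) :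
    noQi i (rv i f) := by
  intro d hq
  by_cases hd : diag d
  case neg => exact diagS_rv hf i d hd
  have hp : d (pv i) ≠ 0 := by rw [← hd i]; exact hq
  rw [coeff_rv, if_pos ⟨hq, hp⟩, coeff_dv, if_pos (diag_sub_ePQ hd)]
  have hr1 : (d - ePQ i : Var n →₀ ℕ) (lv i) = d (lv i) := by
    simp [Finsupp.tsub_apply]
  have E1 : ∀ x : ℕ, d - ePQ i - x • eL i + (x+1) • ePQ i
      = d - x • eL i + x • ePQ i := fun x => shift_eq1 i d x hq hp
  have hA0 : d - (0:ℕ) • eL i + (0:ℕ) • ePQ i = d := by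
    simp
  rw [hr1]
  have hsum1 : ∑ x ∈ Finset.range (d (lv i) + 1),
      MvPowerSeries.coeff (R := ℂ) (d - ePQ i - x • eL i + (x+1) • ePQ i) f =
      ∑ x ∈ Finset.range (d (lv i) + 1),
      MvPowerSeries.coeff (R := ℂ) (d - x • eL i + x • ePQ i) f := by
    apply Finset.sum_congr rfl
    intro x _
    rw [E1]
  rw [hsum1]
  by_cases hr : d (lv i) = 0
  · rw [if_neg (fun hc => hc hr), hr]
    simp only [zero_add, Finset.range_one, Finset.sum_singleton, hA0]
    ring
  · rw [if_pos hr, coeff_dv, if_pos (diag_sub_eL hd)]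
    have hr2 : (d - eL i : Var n →₀ ℕ) (lv i) = d (lv i) - 1 := by
      simp [Finsupp.tsub_apply]
    have E2 : ∀ x : ℕ, d - eL i - x • eL i + (x+1) • ePQ i
        = d - (x+1) • eL i + (x+1) • ePQ i := fun x => shift_eq2 i d x
    have hsum2 : ∑ x ∈ Finset.range ((d - eL i : Var n →₀ ℕ) (lv i) + 1),
        MvPowerSeries.coeff (R := ℂ) (d - eL i - x • eL i + (x+1) • ePQ i) f =
        ∑ x ∈ Finset.range (d (lv i) - 1 + 1),
        MvPowerSeries.coeff (R := ℂ) (d - (x+1) • eL i + (x+1) • ePQ i) f := by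
      rw [hr2]
      apply Finset.sum_congr rfl
      intro x _
      rw [E2]
    rw [hsum2]
    have hrr : d (lv i) - 1 + 1 = d (lv i) := by omega
    rw [hrr]
    rw [Finset.sum_range_succ'
      (fun x => MvPowerSeries.coeff (R := ℂ) (d - x • eL i + x • ePQ i) f) (d (lv i))]
    simp only [hA0]
    ring

lemma noQi_rv_other {f : MvPowerSeries (Var n) ℂ} (i i' : Fin n) (hne : i' ≠ i)
    (hf' : noQi i' f) : noQi i' (rv i f) := by
  intro d hq
  have harg1 : ∀ x : ℕ, (d - ePQ i - x • eL i + (x+1) • ePQ i : Var n →₀ ℕ) (qv i')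
      = d (qv i') := by
    intro x
    have := shift_apply_qv i i' hne d (ePQ i) x (x+1)
    have hz : (ePQ i) (qv i') = 0 := by
      simp [ePQ_apply_qv, Ne.symm hne]
    rw [this, hz]
    omega
  have harg2 : ∀ x : ℕ, (d - eL i - x • eL i + (x+1) • ePQ i : Var n →₀ ℕ) (qv i')
      = d (qv i') := by
    intro x
    have := shift_apply_qv i i' hne d (eL i) x (x+1)
    have hz : (eL i) (qv i') = 0 := by simp
    rw [this, hz]
    omega
  rw [coeff_rv, hf' d hq]
  have h1 : (if d (qv i) ≠ 0 ∧ d (pv i) ≠ 0 then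
      MvPowerSeries.coeff (R := ℂ) (d - ePQ i) (dv i f) else 0) = 0 := by
    split_ifs with h
    · rw [coeff_dv]
      split_ifs with h2
      · apply Finset.sum_eq_zero
        intro x _
        apply hf'
        rw [harg1 x]
        exact hq
      · rfl
    · rfl
  have h2 : (if d (lv i) ≠ 0 then MvPowerSeries.coeff (R := ℂ) (d - eL i) (dv i f) else 0)
      = 0 := by
    split_ifs with h
    · rw [coeff_dv]
      split_ifs with h2
      · apply Finset.sum_eq_zero
        intro x _
        apply hf'
        rw [harg2 x]
        exact hq
      · rfl
    · rfl
  rw [h1, h2]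
  ring

/-- the sequence of successive remainders. -/
noncomputable def Wseq {n : ℕ} (f : MvPowerSeries (Var n) ℂ) :
    ℕ → MvPowerSeries (Var n) ℂ
  | 0 => f
  | (j+1) => if h : j < n then rv ⟨j, h⟩ (Wseq f j) else Wseq f j

lemma decomp {f : MvPowerSeries (Var n) ℂ} (hf : diagS f) :
    ∃ g : Fin n → MvPowerSeries (Var n) ℂ, (∀ i, diagS (g i)) ∧
      ∃ c, noQP c ∧ f = (∑ i : Fin n, g i * uu i) + c := by
  have key : ∀ j, j ≤ n → diagS (Wseq f j) ∧
      (∀ i : Fin n, (i : ℕ) < j → noQi i (Wseq f j)) ∧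
      f = (∑ i ∈ Finset.univ.filter (fun i : Fin n => (i : ℕ) < j),
            dv i (Wseq f (i : ℕ)) * uu i) + Wseq f j := by
    intro j
    induction j with
    | zero =>
      intro _
      refine ⟨hf, fun i hi => absurd hi (by omega), ?_⟩
      have : Finset.univ.filter (fun i : Fin n => (i : ℕ) < 0) = ∅ := by
        ext x; simp
      rw [this, Finset.sum_empty, zero_add]
      rfl
    | succ j ih =>
      intro hj1
      have hjn : j < n := by omega
      obtain ⟨h1, h2, h3⟩ := ih (by omega)
      have hW : Wseq f (j+1) = rv ⟨j, hjn⟩ (Wseq f j) := by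
        show (if h : j < n then rv ⟨j, h⟩ (Wseq f j) else Wseq f j) = _
        rw [dif_pos hjn]
      refine ⟨?_, ?_, ?_⟩
      · rw [hW]; exact diagS_rv h1 _
      · intro i hi
        rw [hW]
        rcases Nat.lt_or_ge (i : ℕ) j with h | h
        · exact noQi_rv_other _ _ (Fin.ne_of_val_ne (show (i : ℕ) ≠ j by omega))
            (h2 i h)
        · have hij : i = ⟨j, hjn⟩ := Fin.ext (show (i : ℕ) = j by omega)
          rw [hij]
          exact noQi_rv_self h1 _
      · have hfilter : Finset.univ.filter (fun i : Fin n => (i : ℕ) < j+1) =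
            insert ⟨j, hjn⟩ (Finset.univ.filter (fun i : Fin n => (i : ℕ) < j)) := by
          ext x
          simp only [Finset.mem_filter, Finset.mem_univ, true_and, Finset.mem_insert,
            Fin.ext_iff]
          omega
        rw [hfilter, Finset.sum_insert (by simp)]
        rw [hW, rv]
        have h3' := h3
        nth_rewrite 1 [h3']
        ring
  obtain ⟨h1, h2, h3⟩ := key n le_rfl
  refine ⟨fun i => dv i (Wseq f (i : ℕ)), fun i => diagS_dv _ _, Wseq f n, ?_, ?_⟩
  · rintro d ⟨i, hi⟩
    by_cases hd : diag d
    · have hq : d (qv i) ≠ 0 := by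
        rcases hi with h | h
        · exact h
        · rw [hd i]; exact h
      exact h2 i i.isLt d hq
    · exact h1 d hd
  · have hfilter : Finset.univ.filter (fun i : Fin n => (i : ℕ) < n) = Finset.univ :=
      Finset.filter_true_of_mem (fun i _ => i.isLt)
    rw [hfilter] at h3
    exact h3

end Part2

section Final

open MvPowerSeries

variable {n : ℕ}

lemma noQP_sub {f g : MvPowerSeries (Var n) ℂ} (hf : noQP f) (hg : noQP g) :
    noQP (f - g) := by
  intro d hd
  rw [map_sub, hf d hd, hg d hd, sub_zero]

lemma noQP_sum {g : Fin n → MvPowerSeries (Var n) ℂ} (h : ∀ i, noQP (g i)) :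
    noQP (∑ i : Fin n, g i) := by
  intro d hd
  rw [map_sum]
  exact Finset.sum_eq_zero fun i _ => h i d hd

lemma noQP_mul_Xl {f : MvPowerSeries (Var n) ℂ} (hf : noQP f) (i : Fin n) :
    noQP (f * X (lv i)) := by
  rintro d ⟨i₀, hi₀⟩
  rw [coeff_mul_Xl]
  split_ifs with h
  · apply hf
    refine ⟨i₀, ?_⟩
    have hq : (d - eL i : Var n →₀ ℕ) (qv i₀) = d (qv i₀) := by
      simp [Finsupp.tsub_apply]
    have hp : (d - eL i : Var n →₀ ℕ) (pv i₀) = d (pv i₀) := by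
      simp [Finsupp.tsub_apply]
    rw [hq, hp]
    exact hi₀
  · rfl

lemma uu_mem (i : Fin n) : uu i ∈ idealI n :=
  Ideal.subset_span ⟨i, rfl⟩

theorem stmt2' (n : ℕ) (α : Fin n → ℝ) (hα : LinearIndependent ℚ α)
    (R : MvPowerSeries (Var n) ℂ) :
    ∃ F : MvPowerSeries (Var n) ℂ, ∃ a : Fin n → MvPowerSeries (Var n) ℂ,
      (∀ i : Fin n, noQP (a i)) ∧
      ∃ S ∈ (idealI n) ^ 2, ∃ c : MvPowerSeries (Var n) ℂ, noQP c ∧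
        poisson F (H0 α) + (∑ i : Fin n, a i * (X (pv i) * X (qv i))) = R + S + c := by
  classical
  have hpois : poisson (Fser α R) (H0 α) = Roff R := poisson_Fser hα R
  -- the diagonal part of R
  set Rd : MvPowerSeries (Var n) ℂ :=
    (fun d => if diag d then MvPowerSeries.coeff (R := ℂ) d R else 0) with hRd
  have coeff_Rd : ∀ d, MvPowerSeries.coeff (R := ℂ) d Rd =
      if diag d then MvPowerSeries.coeff (R := ℂ) d R else 0 := fun d => rfl
  have hRdiagS : diagS Rd := by
    intro d hd
    rw [coeff_Rd, if_neg hd]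
  have hsplit : R = Roff R + Rd := by
    apply MvPowerSeries.ext
    intro d
    rw [map_add, coeff_Roff, coeff_Rd]
    by_cases hd : diag d
    · rw [if_pos hd, if_pos hd]; ring
    · rw [if_neg hd, if_neg hd]; ring
  obtain ⟨h, hhdiag, c0, hc0, hWeq⟩ := decomp hRdiagS
  choose g hg c1 hc1 hh using fun i => decomp (hhdiag i)
  refine ⟨Fser α R, c1, hc1,
    -(∑ i : Fin n, (∑ j : Fin n, g i j * uu j) * uu i), ?_,
    (∑ i : Fin n, c1 i * X (lv i)) - c0, ?_, ?_⟩
  · -- ideal membership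
    apply neg_mem
    apply Ideal.sum_mem
    intro i _
    rw [Finset.sum_mul]
    apply Ideal.sum_mem
    intro j _
    rw [mul_assoc]
    apply Ideal.mul_mem_left
    rw [sq]
    exact Ideal.mul_mem_mul (uu_mem j) (uu_mem i)
  · -- noQP of c
    exact noQP_sub (noQP_sum fun i => noQP_mul_Xl (hc1 i) i) hc0
  · -- the equation
    rw [hpois]
    have hsum : (∑ i : Fin n, h i * uu i) =
        (∑ i : Fin n, (∑ j : Fin n, g i j * uu j) * uu i) +
          ∑ i : Fin n, c1 i * uu i := by
      rw [← Finset.sum_add_distrib]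
      apply Finset.sum_congr rfl
      intro i _
      rw [hh i, add_mul]
    have huu : (∑ i : Fin n, c1 i * uu i) =
        (∑ i : Fin n, c1 i * (X (pv i) * X (qv i))) -
          ∑ i : Fin n, c1 i * X (lv i) := by
      rw [← Finset.sum_sub_distrib]
      apply Finset.sum_congr rfl
      intro i _
      rw [uu, mul_sub]
    nth_rewrite 2 [hsplit]
    rw [hWeq, hsum, huu]
    ring

end Final

/-- (Solvability of the homological equation.) If `α₁,…,αₙ` are real
numbers linearly independent over `ℚ`, `H₀ = Σ (αᵢ+tᵢ)pᵢqᵢ` and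
`I = (p₁q₁−λ₁,…,pₙqₙ−λₙ)`, then for every formal power series `R` there exist a series
`F`, elements `a₁,…,aₙ` and `c` of the subring `ℂ[[t,λ]]`, and `S ∈ I²`, such that
`{F, H₀} + Σᵢ aᵢ pᵢqᵢ = R + S + c`. -/
theorem stmt2 (n : ℕ) (α : Fin n → ℝ) (hα : LinearIndependent ℚ α)
    (R : MvPowerSeries (Var n) ℂ) :
    ∃ F : MvPowerSeries (Var n) ℂ, ∃ a : Fin n → MvPowerSeries (Var n) ℂ,
      (∀ i : Fin n, noQP (a i)) ∧
      ∃ S ∈ (idealI n) ^ 2, ∃ c : MvPowerSeries (Var n) ℂ, noQP c ∧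
        poisson F (H0 α) + (∑ i : Fin n, a i * (X (pv i) * X (qv i))) = R + S + c := by
  exact stmt2' n α hα R
end

section
/- Let n ≥ 1, let U ⊂ ℂⁿ be an open set, let f : U → ℂ be holomorphic, let w ∈ U and σ > 0 be such that the closed polydisc Δ = {z ∈ ℂⁿ : |z_k − w_k| ≤ σ for k = 1,…,n} is contained in U. Then |f(w)|² ≤ (πσ²)^{−n} · ∫_Δ |f(z)|² dV(z), where dV is the Lebesgue measure on ℂⁿ ≅ ℝ^{2n}. -/
open MeasureTheory

open MeasureTheory Metric Real Complex intervalIntegral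

lemma circ_mean {g : ℂ → ℂ} {c : ℂ} {r : ℝ} (hr : 0 < r)
    (hg : DifferentiableOn ℂ g (closedBall c r)) :
    ∫ θ in (0:ℝ)..(2*π), g (circleMap c r θ) = (2*π : ℝ) • g c := by
  have h := hg.circleIntegral_sub_inv_smul (mem_ball_self hr)
  rw [circleIntegral] at h
  simp only [deriv_circleMap, circleMap_sub_center, smul_eq_mul] at h
  have h2 : ∀ θ : ℝ, circleMap 0 r θ * Complex.I * ((circleMap 0 r θ)⁻¹ * g (circleMap c r θ))
      = Complex.I * g (circleMap c r θ) := by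
    intro θ
    have hne : circleMap 0 r θ ≠ 0 := by
      simpa using circleMap_ne_center hr.ne' (c := 0) (θ := θ)
    field_simp
  simp only [h2] at h
  rw [intervalIntegral.integral_const_mul] at h
  have hI : (Complex.I : ℂ) ≠ 0 := Complex.I_ne_zero
  have h3 : (∫ θ in (0:ℝ)..(2*π), g (circleMap c r θ)) = 2 * π * g c := by
    apply mul_left_cancel₀ hI
    rw [h]; ring
  rw [h3, real_smul]
  push_cast
  ring
open MeasureTheory Metric Real Complex intervalIntegral

lemma circ_cont {g : ℂ → ℂ} {c : ℂ} {r : ℝ} (hr : 0 < r)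
    (hg : ContinuousOn g (closedBall c r)) :
    Continuous fun θ : ℝ => g (circleMap c r θ) := by
  rw [← continuousOn_univ]
  apply hg.comp (continuous_circleMap c r).continuousOn
  intro θ _
  exact sphere_subset_closedBall (circleMap_mem_sphere c hr.le θ)

lemma circ_sq {g : ℂ → ℂ} {c : ℂ} {r : ℝ} (hr : 0 < r)
    (hg : DifferentiableOn ℂ g (closedBall c r)) :
    2 * π * ‖g c‖ ^ 2 ≤
      ∫ θ in (0:ℝ)..(2*π), ‖g (circleMap c r θ)‖ ^ 2 := by
  set u : ℝ → ℝ := fun θ => ‖g (circleMap c r θ)‖ with hu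
  have hcu : Continuous u := (continuous_norm).comp (circ_cont hr hg.continuousOn)
  have hiu : IntervalIntegrable u volume 0 (2*π) := hcu.intervalIntegrable _ _
  have hiu2 : IntervalIntegrable (fun θ => u θ ^ 2) volume 0 (2*π) :=
    (hcu.pow 2).intervalIntegrable _ _
  set I := ∫ θ in (0:ℝ)..(2*π), u θ with hI
  set J := ∫ θ in (0:ℝ)..(2*π), u θ ^ 2 with hJ
  have h2pi : (0:ℝ) < 2 * π := by positivity
  have step1 : 2 * π * ‖g c‖ ≤ I := by
    have hmean := circ_mean hr hg
    calc 2 * π * ‖g c‖ = ‖(2*π : ℝ) • g c‖ := by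
          rw [norm_smul, Real.norm_eq_abs, abs_of_pos h2pi]
      _ = ‖∫ θ in (0:ℝ)..(2*π), g (circleMap c r θ)‖ := by rw [hmean]
      _ ≤ I := by
          rw [hI, hu]
          exact intervalIntegral.norm_integral_le_integral_norm h2pi.le
  have hInn : 0 ≤ I := intervalIntegral.integral_nonneg h2pi.le (fun θ _ => by positivity)
  have step2 : I ^ 2 ≤ 2 * π * J := by
    obtain ⟨a, h2a⟩ : ∃ a : ℝ, 2 * π * a = I := ⟨I / (2*π), by field_simp⟩
    have key : (0:ℝ) ≤ ∫ θ in (0:ℝ)..(2*π), (u θ - a)^2 :=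
      intervalIntegral.integral_nonneg h2pi.le (fun θ _ => sq_nonneg _)
    have expand : (∫ θ in (0:ℝ)..(2*π), (u θ - a)^2)
        = J - 2 * a * I + a^2 * (2*π) := by
      have hpt : ∀ θ : ℝ, (u θ - a)^2 = u θ ^ 2 - 2 * a * u θ + a^2 := by intro θ; ring
      simp only [hpt]
      rw [intervalIntegral.integral_add ((hiu2.sub ((hiu.const_mul (2*a)))))
            (intervalIntegrable_const),
          intervalIntegral.integral_sub hiu2 (hiu.const_mul (2*a)),
          intervalIntegral.integral_const_mul, intervalIntegral.integral_const,
          smul_eq_mul]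
      rw [← hJ, ← hI]; ring
    rw [expand] at key
    nlinarith [key, h2a, h2pi]
  set X := ‖g c‖ with hX
  have hXnn : (0:ℝ) ≤ X := norm_nonneg _
  have t1 : (2*π*X)^2 ≤ 2*π*J :=
    le_trans (pow_le_pow_left₀ (by positivity) step1 2) step2
  have t1' : 2*π*(2*π*X^2) ≤ 2*π*J := by
    calc 2*π*(2*π*X^2) = (2*π*X)^2 := by ring
      _ ≤ 2*π*J := t1
  exact le_of_mul_le_mul_left t1' h2pi
open MeasureTheory Metric Real Complex Set

lemma disc_sq {g : ℂ → ℂ} {V : Set ℂ} (hV : IsOpen V) (hg : DifferentiableOn ℂ g V)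
    {c : ℂ} {σ : ℝ} (hσ : 0 < σ) (hB : closedBall c σ ⊆ V) :
    π * σ^2 * ‖g c‖^2 ≤ ∫ z in closedBall c σ, ‖g z‖^2 := by
  set A := ‖g c‖^2 with hA
  set h : ℂ → ℝ := fun z => ‖g z‖^2 with hh
  have e1 : (∫ z in closedBall c σ, h z)
      = ∫ z, (closedBall c σ).indicator h (c + z) := by
    rw [← MeasureTheory.integral_indicator measurableSet_closedBall]
    exact (integral_add_left_eq_self (μ := (volume : Measure ℂ))
      (fun z => (closedBall c σ).indicator h z) c).symm
  have e2 : (∫ z, (closedBall c σ).indicator h (c + z))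
      = ∫ p in polarCoord.target, p.1 • (closedBall c σ).indicator h
          (c + Complex.polarCoord.symm p) :=
    (Complex.integral_comp_polarCoord_symm fun z => (closedBall c σ).indicator h (c + z)).symm
  set S : Set (ℝ × ℝ) := Ioc 0 σ ×ˢ Ioo (-π) π with hS
  set φ : ℝ × ℝ → ℝ := fun p => p.1 * h (c + Complex.polarCoord.symm p) with hφ
  have hSsub : S ⊆ polarCoord.target := by
    rw [polarCoord_target]
    exact Set.prod_mono Ioc_subset_Ioi_self Subset.rfl
  have hSm : MeasurableSet S := (measurableSet_Ioc).prod measurableSet_Ioo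
  have e3 : (∫ p in polarCoord.target, p.1 • (closedBall c σ).indicator h
          (c + Complex.polarCoord.symm p)) = ∫ p in S, φ p := by
    rw [setIntegral_congr_fun polarCoord.open_target.measurableSet
      (g := fun p => S.indicator φ p) ?_ ]
    · rw [MeasureTheory.setIntegral_indicator hSm,
        inter_eq_self_of_subset_right hSsub]
    · intro p hp
      rw [polarCoord_target] at hp
      obtain ⟨hp1, hp2⟩ := hp
      by_cases hpσ : p.1 ≤ σ
      · have hmem : c + Complex.polarCoord.symm p ∈ closedBall c σ := by
          rw [mem_closedBall, Complex.dist_eq, add_sub_cancel_left,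
            Complex.norm_polarCoord_symm, abs_of_pos hp1]
          exact hpσ
        have hpS : p ∈ S := ⟨⟨hp1, hpσ⟩, hp2⟩
        simp only [indicator_of_mem hmem, indicator_of_mem hpS, smul_eq_mul, hφ]
      · have hmem : c + Complex.polarCoord.symm p ∉ closedBall c σ := by
          rw [mem_closedBall, Complex.dist_eq, add_sub_cancel_left,
            Complex.norm_polarCoord_symm, abs_of_pos hp1]
          exact hpσ
        have hpS : p ∉ S := fun hx => hpσ hx.1.2
        simp only [indicator_of_notMem hmem, indicator_of_notMem hpS, smul_zero]
  -- continuity and integrability of φ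
  have hψ : Continuous fun p : ℝ × ℝ => c + Complex.polarCoord.symm p := by
    simp only [Complex.polarCoord_symm_apply]
    fun_prop
  have hmaps : MapsTo (fun p : ℝ × ℝ => c + Complex.polarCoord.symm p)
      (Icc 0 σ ×ˢ Icc (-π) π) (closedBall c σ) := by
    intro p hp
    simp only
    rw [mem_closedBall, Complex.dist_eq, add_sub_cancel_left,
      Complex.norm_polarCoord_symm, _root_.abs_of_nonneg hp.1.1]
    exact hp.1.2
  have hKc : IsCompact (Icc (0:ℝ) σ ×ˢ Icc (-π) π) := isCompact_Icc.prod isCompact_Icc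
  have hφc : ContinuousOn φ (Icc 0 σ ×ˢ Icc (-π) π) := by
    apply ContinuousOn.mul (continuous_fst.continuousOn)
    apply ContinuousOn.pow
    exact continuous_norm.comp_continuousOn
      ((hg.continuousOn.mono hB).comp hψ.continuousOn hmaps)
  have hint : IntegrableOn φ S volume :=
    (hφc.integrableOn_compact hKc).mono_set
      (Set.prod_mono Ioc_subset_Icc_self Ioo_subset_Icc_self)
  have e4 : (∫ p in S, φ p) = ∫ r in Ioc (0:ℝ) σ, ∫ θ in Ioo (-π) π, φ (r, θ) := by
    rw [hS, Measure.volume_eq_prod]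
    apply setIntegral_prod
    rwa [← Measure.volume_eq_prod, ← hS]
  -- lower bound for the inner integral
  have inner_bd : ∀ r ∈ Ioc (0:ℝ) σ,
      2 * π * A * r ≤ ∫ θ in Ioo (-π) π, φ (r, θ) := by
    intro r hr
    have hr0 : 0 < r := hr.1
    have hcirc : ∀ θ : ℝ, c + Complex.polarCoord.symm (r, θ) = circleMap c r θ := by
      intro θ
      rw [Complex.polarCoord_symm_apply, circleMap, Complex.exp_mul_I]
      push_cast
      ring
    have e5 : (∫ θ in Ioo (-π) π, φ (r, θ))
        = r * ∫ θ in Ioo (-π) π, h (circleMap c r θ) := by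
      simp only [hφ, hcirc]
      exact MeasureTheory.integral_const_mul r _
    have e6 : (∫ θ in Ioo (-π) π, h (circleMap c r θ))
        = ∫ θ in (0:ℝ)..(2*π), h (circleMap c r θ) := by
      rw [← MeasureTheory.integral_Ioc_eq_integral_Ioo,
        ← intervalIntegral.integral_of_le (by linarith [pi_pos] : -π ≤ π)]
      have hper : Function.Periodic (fun θ => h (circleMap c r θ)) (2*π) :=
        fun θ => by simp [hh, (periodic_circleMap c r) θ]
      have h2 := hper.intervalIntegral_add_eq (-π) 0
      have e : (-π + 2*π : ℝ) = π := by ring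
      rw [e, zero_add] at h2
      exact h2
    have hg' : DifferentiableOn ℂ g (closedBall c r) :=
      hg.mono ((closedBall_subset_closedBall hr.2).trans hB)
    have := circ_sq hr0 hg'
    rw [e5, e6]
    calc 2 * π * A * r = r * (2 * π * A) := by ring
      _ ≤ r * ∫ θ in (0:ℝ)..(2*π), h (circleMap c r θ) :=
          mul_le_mul_of_nonneg_left this hr0.le
  -- integrability of both sides of the outer comparison
  have houter : Integrable (fun r => ∫ θ in Ioo (-π) π, φ (r, θ))
      (volume.restrict (Ioc (0:ℝ) σ)) := by
    have h2 := hint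
    rw [hS, IntegrableOn, Measure.volume_eq_prod, ← Measure.prod_restrict] at h2
    exact h2.integral_prod_left
  have hlin : Integrable (fun r : ℝ => 2 * π * A * r)
      (volume.restrict (Ioc (0:ℝ) σ)) :=
    (continuous_const.mul continuous_id).integrableOn_Ioc
  have outer_bd : (∫ r in Ioc (0:ℝ) σ, 2 * π * A * r)
      ≤ ∫ r in Ioc (0:ℝ) σ, ∫ θ in Ioo (-π) π, φ (r, θ) :=
    setIntegral_mono_on hlin houter measurableSet_Ioc inner_bd
  have e7 : (∫ r in Ioc (0:ℝ) σ, 2 * π * A * r) = π * σ^2 * A := by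
    rw [← intervalIntegral.integral_of_le hσ.le, intervalIntegral.integral_const_mul,
      integral_id]
    ring
  rw [e1, e2, e3, e4]
  calc π * σ^2 * A = ∫ r in Ioc (0:ℝ) σ, 2 * π * A * r := e7.symm
    _ ≤ _ := outer_bd
open MeasureTheory Metric Real Complex Set

lemma cons_cont {n : ℕ} : Continuous (fun p : ℂ × (Fin n → ℂ) => (Fin.cons p.1 p.2 : Fin (n+1) → ℂ)) := by
  refine continuous_pi fun i => ?_
  induction i using Fin.cases with
  | zero => simpa using continuous_fst
  | succ j =>
    simp only [Fin.cons_succ]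
    exact (continuous_apply j).comp continuous_snd

lemma cons_diff_snd {n : ℕ} (x : ℂ) :
    Differentiable ℂ (fun y : Fin n → ℂ => (Fin.cons x y : Fin (n+1) → ℂ)) := by
  rw [differentiable_pi]
  intro i
  induction i using Fin.cases with
  | zero => simpa using differentiable_const x
  | succ j =>
    have : Differentiable ℂ fun y : Fin n → ℂ => y j :=
      (ContinuousLinearMap.proj (R := ℂ) (φ := fun _ : Fin n => ℂ) j).differentiable
    simpa using this
lemma cons_diff_fst {n : ℕ} (y : Fin n → ℂ) :
    Differentiable ℂ (fun x : ℂ => (Fin.cons x y : Fin (n+1) → ℂ)) := by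
  rw [differentiable_pi]
  intro i
  induction i using Fin.cases with
  | zero => simpa using differentiable_id
  | succ j => simpa using differentiable_const (y j)

lemma poly_sq : ∀ (n : ℕ) (g : (Fin n → ℂ) → ℂ) (V : Set (Fin n → ℂ)), IsOpen V →
    DifferentiableOn ℂ g V → ∀ (w : Fin n → ℂ) (σ : ℝ), 0 < σ →
    {z | ∀ k, ‖z k - w k‖ ≤ σ} ⊆ V →
    (π * σ^2)^n * ‖g w‖^2 ≤
      ∫ z in {z | ∀ k, ‖z k - w k‖ ≤ σ}, ‖g z‖^2 := by
  intro n
  induction n with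
  | zero =>
    intro g V hV hg w σ hσ hΔ
    have hU : {z : Fin 0 → ℂ | ∀ k, ‖z k - w k‖ ≤ σ} = Set.univ :=
      Set.eq_univ_of_forall (fun z k => k.elim0)
    have hz : ∀ z : Fin 0 → ℂ, g z = g w := fun z => congrArg g (funext fun k => k.elim0)
    rw [hU, pow_zero, one_mul, setIntegral_univ]
    simp_rw [hz]
    rw [MeasureTheory.integral_const]
    have hv : (volume (Set.univ : Set (Fin 0 → ℂ))) = 1 := by
      rw [volume_pi, Measure.pi_univ]
      simp
    rw [measureReal_def, hv]
    simp
  | succ n IH =>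
    intro g V hV hg w σ hσ hΔ
    set Δ := {z : Fin (n+1) → ℂ | ∀ k, ‖z k - w k‖ ≤ σ} with hΔdef
    set w' : Fin n → ℂ := fun j => w j.succ with hw'
    set Δ' := {y : Fin n → ℂ | ∀ k, ‖y k - w' k‖ ≤ σ} with hΔ'def
    set B := closedBall (w 0) σ with hBdef
    set e := MeasurableEquiv.piFinSuccAbove (fun _ : Fin (n+1) => ℂ) 0 with he
    have hsymm : ∀ p : ℂ × (Fin n → ℂ), e.symm p = Fin.cons p.1 p.2 := by
      intro p
      simp [he, MeasurableEquiv.piFinSuccAbove_symm_apply, Fin.insertNthEquiv,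
        Fin.insertNth_zero']
    have hconsmem : ∀ (x : ℂ) (y : Fin n → ℂ), x ∈ B → y ∈ Δ' →
        (Fin.cons x y : Fin (n+1) → ℂ) ∈ Δ := by
      intro x y hx hy k
      induction k using Fin.cases with
      | zero => simpa [hBdef, Complex.dist_eq] using hx
      | succ j => simpa using hy j
    have hpre : Δ = e ⁻¹' (B ×ˢ Δ') := by
      ext z
      have hz : e z = (z 0, fun j => z (Fin.succAbove 0 j)) := rfl
      constructor
      · intro hzΔ
        rw [Set.mem_preimage, hz]
        refine ⟨?_, ?_⟩
        · simpa [hBdef, Complex.dist_eq] using hzΔ 0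
        · intro j
          simpa [Fin.succAbove_zero, hw'] using hzΔ j.succ
      · intro hzp k
        rw [Set.mem_preimage, hz] at hzp
        induction k using Fin.cases with
        | zero => simpa [hBdef, Complex.dist_eq] using hzp.1
        | succ j => simpa [Fin.succAbove_zero, hw'] using hzp.2 j
    have hmp := volume_preserving_piFinSuccAbove (fun _ : Fin (n+1) => ℂ) 0
    have step1 : (∫ z in Δ, ‖g z‖^2)
        = ∫ p in B ×ˢ Δ', ‖g (Fin.cons p.1 p.2)‖^2 := by
      rw [hpre]
      have h1 := hmp.setIntegral_preimage_emb e.measurableEmbedding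
        (fun p => ‖g (e.symm p)‖^2) (B ×ˢ Δ')
      simp only [← he, MeasurableEquiv.symm_apply_apply] at h1
      simp only [hsymm] at h1
      exact h1
    have hΔ'c : IsCompact Δ' := by
      have hpi : Δ' = Set.pi Set.univ (fun k => closedBall (w' k) σ) := by
        ext y
        simp [hΔ'def, Complex.dist_eq]
      rw [hpi]
      exact isCompact_univ_pi fun k => isCompact_closedBall _ _
    have hBc : IsCompact B := isCompact_closedBall _ _
    have hH : ContinuousOn
        (fun p : ℂ × (Fin n → ℂ) => ‖g (Fin.cons p.1 p.2)‖^2) (B ×ˢ Δ') := by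
      apply ContinuousOn.pow
      apply continuous_norm.comp_continuousOn
      apply (hg.continuousOn.mono hΔ).comp cons_cont.continuousOn
      intro p hp
      exact hconsmem p.1 p.2 hp.1 hp.2
    have hHint : IntegrableOn
        (fun p : ℂ × (Fin n → ℂ) => ‖g (Fin.cons p.1 p.2)‖^2) (B ×ˢ Δ') volume :=
      hH.integrableOn_compact (hBc.prod hΔ'c)
    have step2 : (∫ p in B ×ˢ Δ', ‖g (Fin.cons p.1 p.2)‖^2)
        = ∫ x in B, ∫ y in Δ', ‖g (Fin.cons x y)‖^2 := by
      rw [Measure.volume_eq_prod]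
      apply setIntegral_prod
      rwa [IntegrableOn, ← Measure.volume_eq_prod]
    have inner_bd : ∀ x ∈ B, (π * σ^2)^n * ‖g (Fin.cons x w')‖^2
        ≤ ∫ y in Δ', ‖g (Fin.cons x y)‖^2 := by
      intro x hx
      have hVx : IsOpen ((fun y : Fin n → ℂ => (Fin.cons x y : Fin (n+1) → ℂ)) ⁻¹' V) :=
        (cons_diff_snd x).continuous.isOpen_preimage _ hV
      have hgx : DifferentiableOn ℂ (fun y => g (Fin.cons x y))
          ((fun y : Fin n → ℂ => (Fin.cons x y : Fin (n+1) → ℂ)) ⁻¹' V) :=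
        hg.comp (cons_diff_snd x).differentiableOn (fun y hy => hy)
      exact IH (fun y => g (Fin.cons x y)) _ hVx hgx w' σ hσ
        (fun y hy => hΔ (hconsmem x y hx hy))
    have houter : Integrable (fun x => ∫ y in Δ', ‖g (Fin.cons x y)‖^2)
        (volume.restrict B) := by
      have h2 := hHint
      rw [IntegrableOn, Measure.volume_eq_prod, ← Measure.prod_restrict] at h2
      exact h2.integral_prod_left
    have hw'mem : w' ∈ Δ' := by
      intro k
      simp [hσ.le]
    have hG : ContinuousOn (fun x : ℂ => ‖g (Fin.cons x w')‖^2) B := by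
      apply ContinuousOn.pow
      apply continuous_norm.comp_continuousOn
      apply (hg.continuousOn.mono hΔ).comp (cons_diff_fst w').continuous.continuousOn
      intro x hx
      exact hconsmem x w' hx hw'mem
    have hGint : IntegrableOn
        (fun x : ℂ => (π * σ^2)^n * ‖g (Fin.cons x w')‖^2) B volume :=
      (hG.integrableOn_compact hBc).const_mul _
    have step3 : (∫ x in B, (π * σ^2)^n * ‖g (Fin.cons x w')‖^2)
        ≤ ∫ x in B, ∫ y in Δ', ‖g (Fin.cons x y)‖^2 :=
      setIntegral_mono_on hGint houter measurableSet_closedBall inner_bd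
    have hconsw : (Fin.cons (w 0) w' : Fin (n+1) → ℂ) = w := by
      funext i
      induction i using Fin.cases with
      | zero => simp
      | succ j => simp [hw']
    have step4 : π * σ^2 * ‖g w‖^2
        ≤ ∫ x in B, ‖g (Fin.cons x w')‖^2 := by
      have hV1 : IsOpen ((fun x : ℂ => (Fin.cons x w' : Fin (n+1) → ℂ)) ⁻¹' V) :=
        (cons_diff_fst w').continuous.isOpen_preimage _ hV
      have hg1 : DifferentiableOn ℂ (fun x : ℂ => g (Fin.cons x w'))
          ((fun x : ℂ => (Fin.cons x w' : Fin (n+1) → ℂ)) ⁻¹' V) :=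
        hg.comp (cons_diff_fst w').differentiableOn (fun x hx => hx)
      have := disc_sq hV1 hg1 hσ (c := w 0)
        (fun x hx => hΔ (hconsmem x w' hx hw'mem))
      rwa [hconsw] at this
    have hpow : (0:ℝ) ≤ (π * σ^2)^n := by positivity
    calc (π * σ^2)^(n+1) * ‖g w‖^2
        = (π * σ^2)^n * (π * σ^2 * ‖g w‖^2) := by ring
      _ ≤ (π * σ^2)^n * ∫ x in B, ‖g (Fin.cons x w')‖^2 :=
          mul_le_mul_of_nonneg_left step4 hpow
      _ = ∫ x in B, (π * σ^2)^n * ‖g (Fin.cons x w')‖^2 :=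
          (MeasureTheory.integral_const_mul _ _).symm
      _ ≤ ∫ x in B, ∫ y in Δ', ‖g (Fin.cons x y)‖^2 := step3
      _ = ∫ p in B ×ˢ Δ', ‖g (Fin.cons p.1 p.2)‖^2 := step2.symm
      _ = ∫ z in Δ, ‖g z‖^2 := step1.symm
/-- (Sub-mean-value inequality for `|f|²` on a polydisc.)  If `f` is
holomorphic on an open set `U ⊆ ℂⁿ`, `w ∈ U`, `σ > 0` and the closed polydisc
`Δ = {z : |z_k − w_k| ≤ σ}` is contained in `U`, then
`|f(w)|² ≤ (πσ²)^{−n} ∫_Δ |f|² dV`, where `dV` is Lebesgue measure on `ℂⁿ ≅ ℝ^{2n}`. -/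
theorem stmt4 (n : ℕ) (hn : 1 ≤ n) (U : Set (Fin n → ℂ)) (hU : IsOpen U)
    (f : (Fin n → ℂ) → ℂ) (hf : DifferentiableOn ℂ f U)
    (w : Fin n → ℂ) (hw : w ∈ U) (σ : ℝ) (hσ : 0 < σ)
    (hΔ : {z : Fin n → ℂ | ∀ k : Fin n, ‖z k - w k‖ ≤ σ} ⊆ U) :
    ‖f w‖ ^ 2 ≤
      ((Real.pi * σ ^ 2) ^ n)⁻¹ *
        ∫ z in {z : Fin n → ℂ | ∀ k : Fin n, ‖z k - w k‖ ≤ σ},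
          ‖f z‖ ^ 2 := by
  have key := poly_sq n f U hU hf w σ hσ hΔ
  have hpos : (0:ℝ) < (Real.pi * σ ^ 2) ^ n := by positivity
  calc ‖f w‖ ^ 2
      = ((Real.pi * σ ^ 2) ^ n)⁻¹ * ((Real.pi * σ ^ 2) ^ n * ‖f w‖ ^ 2) := by
        field_simp
    _ ≤ ((Real.pi * σ ^ 2) ^ n)⁻¹ *
        ∫ z in {z : Fin n → ℂ | ∀ k : Fin n, ‖z k - w k‖ ≤ σ},
          ‖f z‖ ^ 2 :=
        mul_le_mul_of_nonneg_left key (inv_nonneg.mpr hpos.le)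
end

section
/- Let n ≥ 1, s > 0, a > 0, and α ∈ ℂⁿ. Let f = Σ_{(i,j)∈S} f_{ij} q^i p^j be a polynomial in the 2n variables q₁,…,qₙ, p₁,…,pₙ with complex coefficients, where S ⊂ ℕⁿ × ℕⁿ is a finite set such that for every (i,j) ∈ S the integer vector i − j ∈ ℤⁿ is nonzero and |⟨α, i − j⟩| ≥ a, with ⟨α, v⟩ = Σ_{k=1}^n α_k v_k. Define g = Σ_{(i,j)∈S} (f_{ij}/⟨α, i−j⟩) q^i p^j. Then the L²-norms over the closed polydisc D_s = {(q,p) ∈ ℂ^{2n} : |q_k| ≤ s, |p_k| ≤ s} (with respect to Lebesgue measure on ℂ^{2n} ≅ ℝ^{4n}) satisfy ‖g‖_{L²(D_s)} ≤ a^{−1} · ‖f‖_{L²(D_s)}. -/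
open MeasureTheory

section Aux

open Set Metric Complex

private lemma disc_ortho (s : ℝ) (a b : ℕ) (h : a ≠ b) :
    ∫ z in closedBall (0:ℂ) s, z ^ a * (starRingEnd ℂ) z ^ b = 0 := by
  set θ : ℝ := Real.pi / (a + b + 1) with hθ
  set u : Circle := Circle.exp θ with hu
  set E : ℂ := ((a : ℂ) - (b : ℂ)) * (θ : ℂ) * I with hE
  have hrot : MeasurePreserving (rotation u) volume volume :=
    (rotation u).measurePreserving
  have hpre : (rotation u) ⁻¹' (closedBall (0:ℂ) s) = closedBall (0:ℂ) s := by
    ext z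
    simp only [mem_preimage, mem_closedBall, Complex.dist_eq, sub_zero, rotation_apply,
      norm_mul, Circle.norm_coe, one_mul]
  have hmp : MeasurePreserving (rotation u) (volume.restrict (closedBall (0:ℂ) s))
      (volume.restrict (closedBall (0:ℂ) s)) := by
    have := hrot.restrict_preimage (s := closedBall (0:ℂ) s) measurableSet_closedBall
    rwa [hpre] at this
  have hcomp : ∫ z in closedBall (0:ℂ) s, z ^ a * (starRingEnd ℂ) z ^ b =
      ∫ z in closedBall (0:ℂ) s, (rotation u z) ^ a * (starRingEnd ℂ) (rotation u z) ^ b :=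
    (hmp.integral_comp ((rotation u).toHomeomorph.toMeasurableEquiv.measurableEmbedding)
      (fun z => z ^ a * (starRingEnd ℂ) z ^ b)).symm
  have hval : ∀ z : ℂ, (rotation u z) ^ a * (starRingEnd ℂ) (rotation u z) ^ b =
      Complex.exp E * (z ^ a * (starRingEnd ℂ) z ^ b) := by
    intro z
    simp only [rotation_apply, hu, Circle.coe_exp, map_mul, ← Complex.exp_conj,
      Complex.conj_I, Complex.conj_ofReal, mul_pow, ← Complex.exp_nat_mul]
    rw [show E = (a : ℂ) * ((θ:ℂ) * I) + (b : ℂ) * ((θ:ℂ) * -I) by rw [hE]; ring,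
      Complex.exp_add]
    ring
  have hne : Complex.exp E ≠ 1 := by
    intro h1
    obtain ⟨k, hk⟩ := Complex.exp_eq_one_iff.mp h1
    rw [hE] at hk
    have hI : ((a : ℂ) - b) * (θ : ℂ) = (k : ℂ) * (2 * Real.pi) := by
      have h2 : (((a : ℂ) - b) * (θ : ℂ)) * I = ((k : ℂ) * (2 * Real.pi)) * I := by
        rw [hk]; ring
      exact mul_right_cancel₀ Complex.I_ne_zero h2
    have hR : ((a : ℝ) - b) * θ = (k : ℝ) * (2 * Real.pi) := by exact_mod_cast hI
    rw [hθ] at hR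
    have hπ := Real.pi_pos
    have hd : (0:ℝ) < (a : ℝ) + b + 1 := by positivity
    have hZ : ((a : ℝ) - b) = (k : ℝ) * 2 * ((a : ℝ) + b + 1) := by
      have h3 : ((a : ℝ) - b) * Real.pi = ((k : ℝ) * 2 * ((a : ℝ) + b + 1)) * Real.pi := by
        field_simp at hR
        linear_combination Real.pi * hR
      exact mul_right_cancel₀ (ne_of_gt hπ) h3
    have hZi : (a : ℤ) - b = k * 2 * ((a : ℤ) + b + 1) := by exact_mod_cast hZ
    rcases lt_trichotomy k 0 with hk0 | hk0 | hk0
    · nlinarith [hZi, (Nat.cast_nonneg a : (0:ℤ) ≤ a), (Nat.cast_nonneg b : (0:ℤ) ≤ b)]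
    · subst hk0; simp at hZi; omega
    · nlinarith [hZi, (Nat.cast_nonneg a : (0:ℤ) ≤ a), (Nat.cast_nonneg b : (0:ℤ) ≤ b)]
  have hself : ∫ z in closedBall (0:ℂ) s, z ^ a * (starRingEnd ℂ) z ^ b =
      Complex.exp E * ∫ z in closedBall (0:ℂ) s, z ^ a * (starRingEnd ℂ) z ^ b := by
    conv_lhs => rw [hcomp]
    simp_rw [hval]
    rw [integral_const_mul]
  have h0 : (1 - Complex.exp E) *
      (∫ z in closedBall (0:ℂ) s, z ^ a * (starRingEnd ℂ) z ^ b) = 0 := by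
    linear_combination hself
  rcases mul_eq_zero.mp h0 with h1 | h1
  · exact absurd (sub_eq_zero.mp h1).symm hne
  · exact h1

private lemma expand_ortho {X : Type*} [MeasurableSpace X] (μ : Measure X)
    {ι : Type*} [DecidableEq ι] (S : Finset ι) (M : ι → X → ℂ) (e : ι → ℂ)
    (hint : ∀ i ∈ S, ∀ j ∈ S, Integrable (fun x => M i x * (starRingEnd ℂ) (M j x)) μ)
    (horth : ∀ i ∈ S, ∀ j ∈ S, i ≠ j → ∫ x, M i x * (starRingEnd ℂ) (M j x) ∂μ = 0) :
    ∫ x, ‖∑ i ∈ S, e i * M i x‖ ^ 2 ∂μ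
      = ∑ i ∈ S, Complex.normSq (e i) * ∫ x, Complex.normSq (M i x) ∂μ := by
  have hpt : ∀ x, ‖∑ i ∈ S, e i * M i x‖ ^ 2 =
      (∑ i ∈ S, ∑ j ∈ S, (e i * (starRingEnd ℂ) (e j)) *
        (M i x * (starRingEnd ℂ) (M j x))).re := by
    intro x
    rw [Complex.sq_norm, ← Complex.ofReal_re ((Complex.normSq (∑ i ∈ S, e i * M i x) : ℝ)),
      ← Complex.mul_conj]
    congr 1
    rw [map_sum, Finset.sum_mul_sum]
    refine Finset.sum_congr rfl fun i _ => Finset.sum_congr rfl fun j _ => ?_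
    rw [map_mul]; ring
  simp_rw [hpt]
  have hint2 : Integrable (fun x => ∑ i ∈ S, ∑ j ∈ S,
      (e i * (starRingEnd ℂ) (e j)) * (M i x * (starRingEnd ℂ) (M j x))) μ := by
    apply integrable_finset_sum
    intro i hi
    apply integrable_finset_sum
    intro j hj
    exact ((hint i hi j hj).const_mul _)
  rw [← RCLike.re_eq_complex_re, integral_re hint2, RCLike.re_eq_complex_re]
  rw [integral_finset_sum _ fun i hi =>
    integrable_finset_sum _ fun j hj => (hint i hi j hj).const_mul _]
  have hdiag : ∀ i ∈ S, (∫ x, ∑ j ∈ S, (e i * (starRingEnd ℂ) (e j)) *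
      (M i x * (starRingEnd ℂ) (M j x)) ∂μ)
      = ((Complex.normSq (e i) * ∫ x, Complex.normSq (M i x) ∂μ : ℝ) : ℂ) := by
    intro i hi
    rw [integral_finset_sum _ fun j hj => (hint i hi j hj).const_mul _]
    rw [Finset.sum_eq_single_of_mem i hi (fun j hj hne => by
      rw [integral_const_mul, horth i hi j hj (fun hij => hne hij.symm), mul_zero])]
    rw [integral_const_mul, Complex.mul_conj]
    have : ∫ x, M i x * (starRingEnd ℂ) (M i x) ∂μ
        = ((∫ x, Complex.normSq (M i x) ∂μ : ℝ) : ℂ) := by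
      simp_rw [Complex.mul_conj]
      exact integral_ofReal
    rw [this]
    push_cast
    ring
  rw [Finset.sum_congr rfl hdiag, Complex.re_sum]
  exact Finset.sum_congr rfl fun i hi => Complex.ofReal_re _

private lemma pi_restrict_eq (n : ℕ) (s : ℝ) :
    (volume : Measure (Fin n → ℂ)).restrict (univ.pi fun _ => closedBall (0:ℂ) s)
      = Measure.pi (fun _ : Fin n => volume.restrict (closedBall (0:ℂ) s)) := by
  refine (Measure.pi_eq fun t ht => ?_).symm
  rw [Measure.restrict_apply (MeasurableSet.univ_pi ht), ← Set.pi_inter_distrib,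
    volume_pi, Measure.pi_pi]
  exact Finset.prod_congr rfl fun k _ => (Measure.restrict_apply (ht k)).symm

private lemma pi_prod_integral (n : ℕ) (s : ℝ) (f : Fin n → ℂ → ℂ) :
    ∫ x : Fin n → ℂ, ∏ k, f k (x k)
        ∂(Measure.pi fun _ : Fin n => volume.restrict (closedBall (0:ℂ) s))
      = ∏ k, ∫ z, f k z ∂(volume.restrict (closedBall (0:ℂ) s)) := by
  have inst : SigmaFinite ((volume : Measure ℂ).restrict (closedBall (0:ℂ) s)) := inferInstance
  letI : MeasureSpace ℂ := ⟨volume.restrict (closedBall (0:ℂ) s)⟩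
  haveI : SigmaFinite (volume : Measure ℂ) := inst
  exact integral_fintype_prod_eq_prod f

private lemma pi_ortho (n : ℕ) (s : ℝ) (i i' : Fin n → ℕ) (h : i ≠ i') :
    ∫ x : Fin n → ℂ, (∏ k, x k ^ i k) * (starRingEnd ℂ) (∏ k, x k ^ i' k)
        ∂(Measure.pi fun _ : Fin n => volume.restrict (closedBall (0:ℂ) s)) = 0 := by
  have : ∀ x : Fin n → ℂ, (∏ k, x k ^ i k) * (starRingEnd ℂ) (∏ k, x k ^ i' k)
      = ∏ k, (x k ^ i k * (starRingEnd ℂ) (x k) ^ i' k) := by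
    intro x
    rw [map_prod, Finset.prod_mul_distrib]
    simp [map_pow]
  simp_rw [this]
  rw [pi_prod_integral n s fun k z => z ^ i k * (starRingEnd ℂ) z ^ i' k]
  obtain ⟨k0, hk0⟩ := Function.ne_iff.mp h
  exact Finset.prod_eq_zero (Finset.mem_univ k0) (disc_ortho s (i k0) (i' k0) hk0)

end Aux

/-- (L²-bound for the small-divisor (Hadamard) operator.)  Let
`f = Σ_{(i,j)∈S} f_{ij} q^i p^j` be a polynomial in `q₁,…,qₙ,p₁,…,pₙ` whose exponents
satisfy `i − j ≠ 0` and `|⟨α, i−j⟩| ≥ a > 0`, and let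
`g = Σ_{(i,j)∈S} (f_{ij}/⟨α,i−j⟩) q^i p^j`.  Then on the closed polydisc
`D_s = {(q,p) : |q_k| ≤ s, |p_k| ≤ s}` one has `‖g‖_{L²(D_s)} ≤ a⁻¹ ‖f‖_{L²(D_s)}`. -/
theorem stmt7 (n : ℕ) (hn : 1 ≤ n) (s a : ℝ) (hs : 0 < s) (ha : 0 < a)
    (α : Fin n → ℂ) (S : Finset ((Fin n → ℕ) × (Fin n → ℕ)))
    (c : (Fin n → ℕ) × (Fin n → ℕ) → ℂ)
    (hS : ∀ ij ∈ S, (fun k : Fin n => (ij.1 k : ℤ) - (ij.2 k : ℤ)) ≠ 0 ∧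
      a ≤ ‖∑ k : Fin n, α k * ((ij.1 k : ℂ) - (ij.2 k : ℂ))‖) :
    Real.sqrt (∫ x in {x : (Fin n → ℂ) × (Fin n → ℂ) |
        (∀ k : Fin n, ‖x.1 k‖ ≤ s) ∧ (∀ k : Fin n, ‖x.2 k‖ ≤ s)},
        ‖∑ ij ∈ S,
          c ij / (∑ k : Fin n, α k * ((ij.1 k : ℂ) - (ij.2 k : ℂ))) *
            (∏ k : Fin n, x.1 k ^ ij.1 k) * ∏ k : Fin n, x.2 k ^ ij.2 k‖ ^ 2) ≤
      a⁻¹ * Real.sqrt (∫ x in {x : (Fin n → ℂ) × (Fin n → ℂ) |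
        (∀ k : Fin n, ‖x.1 k‖ ≤ s) ∧ (∀ k : Fin n, ‖x.2 k‖ ≤ s)},
        ‖∑ ij ∈ S,
          c ij * (∏ k : Fin n, x.1 k ^ ij.1 k) * ∏ k : Fin n, x.2 k ^ ij.2 k‖ ^ 2) := by
  classical
  set d : (Fin n → ℕ) × (Fin n → ℕ) → ℂ :=
    fun ij => ∑ k : Fin n, α k * ((ij.1 k : ℂ) - (ij.2 k : ℂ)) with hd
  set B : Set ℂ := Metric.closedBall (0:ℂ) s with hB
  set ν : Measure ℂ := volume.restrict B with hν
  set P : Set (Fin n → ℂ) := Set.univ.pi fun _ => B with hP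
  set D : Set ((Fin n → ℂ) × (Fin n → ℂ)) := {x : (Fin n → ℂ) × (Fin n → ℂ) |
      (∀ k : Fin n, ‖x.1 k‖ ≤ s) ∧ (∀ k : Fin n, ‖x.2 k‖ ≤ s)} with hD
  set μ : Measure ((Fin n → ℂ) × (Fin n → ℂ)) :=
    (Measure.pi fun _ : Fin n => ν).prod (Measure.pi fun _ : Fin n => ν) with hμdef
  set M : ((Fin n → ℕ) × (Fin n → ℕ)) → ((Fin n → ℂ) × (Fin n → ℂ)) → ℂ :=
    fun ij x => (∏ k : Fin n, x.1 k ^ ij.1 k) * ∏ k : Fin n, x.2 k ^ ij.2 k with hM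
  have hsetD : D = P ×ˢ P := by
    ext x
    simp only [hD, hP, hB, Set.mem_setOf_eq, Set.mem_prod, Set.mem_pi, Set.mem_univ,
      forall_const, Metric.mem_closedBall, Complex.dist_eq, sub_zero, true_implies]
  have hμ : (volume : Measure ((Fin n → ℂ) × (Fin n → ℂ))).restrict D = μ := by
    rw [hsetD, Measure.volume_eq_prod, ← Measure.prod_restrict, hμdef, hP, hν, hB,
      pi_restrict_eq]
  -- compactness and integrability
  have hcomp : IsCompact (P ×ˢ P) := by
    refine IsCompact.prod ?_ ?_ <;>
      exact isCompact_univ_pi fun _ => isCompact_closedBall _ _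
  have hcont : ∀ ij : (Fin n → ℕ) × (Fin n → ℕ), Continuous (M ij) := by
    intro ij
    apply Continuous.mul
    · exact continuous_finset_prod _ fun k _ => ((continuous_apply k).comp continuous_fst).pow _
    · exact continuous_finset_prod _ fun k _ => ((continuous_apply k).comp continuous_snd).pow _
  have hint : ∀ i ∈ S, ∀ j ∈ S,
      Integrable (fun x => M i x * (starRingEnd ℂ) (M j x)) μ := by
    intro i _ j _
    rw [← hμ, hsetD]
    exact (((hcont i).mul (Complex.continuous_conj.comp (hcont j))).continuousOn).integrableOn_compact
      hcomp
  have horth : ∀ i ∈ S, ∀ j ∈ S, i ≠ j →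
      ∫ x, M i x * (starRingEnd ℂ) (M j x) ∂μ = 0 := by
    intro i _ j _ hij
    have hrw : ∀ x : (Fin n → ℂ) × (Fin n → ℂ), M i x * (starRingEnd ℂ) (M j x)
        = ((∏ k : Fin n, x.1 k ^ i.1 k) * (starRingEnd ℂ) (∏ k : Fin n, x.1 k ^ j.1 k))
          * ((∏ k : Fin n, x.2 k ^ i.2 k) * (starRingEnd ℂ) (∏ k : Fin n, x.2 k ^ j.2 k)) := by
      intro x
      simp only [hM, map_mul]
      ring
    simp_rw [hrw]
    rw [hμdef]
    rw [integral_prod_mul (μ := Measure.pi fun _ : Fin n => ν) (ν := Measure.pi fun _ : Fin n => ν)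
      (f := fun q : Fin n → ℂ => (∏ k : Fin n, q k ^ i.1 k) *
        (starRingEnd ℂ) (∏ k : Fin n, q k ^ j.1 k))
      (g := fun p : Fin n → ℂ => (∏ k : Fin n, p k ^ i.2 k) *
        (starRingEnd ℂ) (∏ k : Fin n, p k ^ j.2 k))]
    have : i.1 ≠ j.1 ∨ i.2 ≠ j.2 := by
      by_contra hcon
      push_neg at hcon
      exact hij (Prod.ext hcon.1 hcon.2)
    rcases this with h1 | h2
    · rw [pi_ortho n s i.1 j.1 h1, zero_mul]
    · rw [pi_ortho n s i.2 j.2 h2, mul_zero]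
  have hIg := expand_ortho μ S M (fun ij => c ij / d ij) hint horth
  have hIf := expand_ortho μ S M c hint horth
  have hint_g : ∫ x, ‖∑ ij ∈ S, c ij / d ij * (∏ k : Fin n, x.1 k ^ ij.1 k) *
      ∏ k : Fin n, x.2 k ^ ij.2 k‖ ^ 2 ∂μ
      = ∑ ij ∈ S, Complex.normSq (c ij / d ij) * ∫ x, Complex.normSq (M ij x) ∂μ := by
    rw [← hIg]
    congr 1
    ext x
    congr 2
    exact Finset.sum_congr rfl fun ij _ => by rw [hM]; ring
  have hint_f : ∫ x, ‖∑ ij ∈ S, c ij * (∏ k : Fin n, x.1 k ^ ij.1 k) *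
      ∏ k : Fin n, x.2 k ^ ij.2 k‖ ^ 2 ∂μ
      = ∑ ij ∈ S, Complex.normSq (c ij) * ∫ x, Complex.normSq (M ij x) ∂μ := by
    rw [← hIf]
    congr 1
    ext x
    congr 2
    exact Finset.sum_congr rfl fun ij _ => by rw [hM]; ring
  -- the two set integrals
  have hg : (∫ x in D, ‖∑ ij ∈ S, c ij / d ij * (∏ k : Fin n, x.1 k ^ ij.1 k) *
      ∏ k : Fin n, x.2 k ^ ij.2 k‖ ^ 2)
      = ∑ ij ∈ S, Complex.normSq (c ij / d ij) * ∫ x, Complex.normSq (M ij x) ∂μ := by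
    rw [hμ]; exact hint_g
  have hf : (∫ x in D, ‖∑ ij ∈ S, c ij * (∏ k : Fin n, x.1 k ^ ij.1 k) *
      ∏ k : Fin n, x.2 k ^ ij.2 k‖ ^ 2)
      = ∑ ij ∈ S, Complex.normSq (c ij) * ∫ x, Complex.normSq (M ij x) ∂μ := by
    rw [hμ]; exact hint_f
  rw [hg, hf]
  have hterm : ∑ ij ∈ S, Complex.normSq (c ij / d ij) * ∫ x, Complex.normSq (M ij x) ∂μ
      ≤ (a⁻¹)^2 * ∑ ij ∈ S, Complex.normSq (c ij) * ∫ x, Complex.normSq (M ij x) ∂μ := by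
    rw [Finset.mul_sum]
    refine Finset.sum_le_sum fun ij hij => ?_
    have hN : 0 ≤ ∫ x, Complex.normSq (M ij x) ∂μ :=
      integral_nonneg fun x => Complex.normSq_nonneg _
    have habs : a ≤ ‖d ij‖ := (hS ij hij).2
    have hd2 : a ^ 2 ≤ Complex.normSq (d ij) := by
      rw [← Complex.sq_norm]
      exact pow_le_pow_left₀ ha.le habs 2
    have : Complex.normSq (c ij / d ij) ≤ (a⁻¹)^2 * Complex.normSq (c ij) := by
      rw [map_div₀, inv_pow, inv_mul_eq_div, div_le_div_iff₀ (lt_of_lt_of_le (by positivity) hd2)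
        (by positivity)]
      nlinarith [Complex.normSq_nonneg (c ij), hd2]
    rw [← mul_assoc]
    exact mul_le_mul_of_nonneg_right this hN
  have hfnonneg : 0 ≤ ∑ ij ∈ S, Complex.normSq (c ij) * ∫ x, Complex.normSq (M ij x) ∂μ :=
    Finset.sum_nonneg fun ij _ => mul_nonneg (Complex.normSq_nonneg _)
      (integral_nonneg fun x => Complex.normSq_nonneg _)
  calc Real.sqrt (∑ ij ∈ S, Complex.normSq (c ij / d ij) * ∫ x, Complex.normSq (M ij x) ∂μ)
      ≤ Real.sqrt ((a⁻¹)^2 * ∑ ij ∈ S, Complex.normSq (c ij) * ∫ x, Complex.normSq (M ij x) ∂μ) :=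
        Real.sqrt_le_sqrt hterm
    _ = a⁻¹ * Real.sqrt (∑ ij ∈ S, Complex.normSq (c ij) * ∫ x, Complex.normSq (M ij x) ∂μ) := by
        rw [Real.sqrt_mul (sq_nonneg _), Real.sqrt_sq (inv_nonneg.mpr ha.le)]
end

section
/- Let n ≥ 1, N ∈ ℕ, 0 extensionless< s < t ≤ 1, and let f be continuous on the closed polydisc D_t = {z ∈ ℂⁿ : |z_k| ≤ t} and holomorphic on its interior, with Taylor expansion f(z) = Σ_i a_i z^i at the origin. Assume a_i = 0 for every multi-index i with |i| < N, where |i| = i₁+…+iₙ. Then sup_{z∈D_s} |f(z)| ≤ (t−s)^{−n} · (s/t)^N · sup_{z∈D_t} |f(z)|. -/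
open Metric Filter

/-- One-variable key lemma: if `F` is given by a power series `∑ c m * y ^ m` on the unit
ball, is differentiable there, bounded by `M`, and the first `N` coefficients vanish, then
`‖F x‖ ≤ M * (x ^ N * (1 - x)⁻¹)` for real `0 ≤ x < 1`. -/
private lemma stmt10_onevar {N : ℕ} {F : ℂ → ℂ} {c : ℕ → ℂ} {M : ℝ}
    (hF : ∀ y : ℂ, ‖y‖ < 1 → HasSum (fun m => c m * y ^ m) (F y))
    (hd : DifferentiableOn ℂ F (Metric.ball 0 1))
    (hM : ∀ y : ℂ, ‖y‖ < 1 → ‖F y‖ ≤ M)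
    (hc : ∀ m, m < N → c m = 0)
    {x : ℝ} (hx0 : 0 ≤ x) (hx1 : x < 1) :
    ‖F (x : ℂ)‖ ≤ M * (x ^ N * (1 - x)⁻¹) := by
  have hM0 : 0 ≤ M := le_trans (norm_nonneg _) (hM 0 (by norm_num))
  set q : FormalMultilinearSeries ℂ ℂ ℂ :=
    fun m => ContinuousMultilinearMap.mkPiRing ℂ (Fin m) (c m) with hqdef
  have hqapp : ∀ (m : ℕ) (y : ℂ), (q m fun _ => y) = c m * y ^ m := by
    intro m y
    simp [hqdef, ContinuousMultilinearMap.mkPiRing_apply, Finset.prod_const, smul_eq_mul,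
      mul_comm]
  have hqnorm : ∀ m, ‖q m‖ = ‖c m‖ := fun m =>
    ContinuousMultilinearMap.norm_mkPiRing (𝕜 := ℂ) (ι := Fin m) (c m)
  -- `q` is a power series for `F` on the unit ball
  have hq : HasFPowerSeriesOnBall F q 0 1 := by
    refine ⟨?_, one_pos, ?_⟩
    · refine ENNReal.le_of_forall_nnreal_lt fun ρ hρ => ?_
      have hρ1 : (ρ : ℝ) < 1 := by exact_mod_cast hρ
      have hρnorm : ‖((ρ : ℝ) : ℂ)‖ < 1 := by
        simpa [Complex.norm_real, abs_of_nonneg ρ.coe_nonneg] using hρ1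
      have hsum := (hF ((ρ : ℝ) : ℂ) hρnorm).summable
      refine q.le_radius_of_tendsto (l := 0) ?_
      have h0 := tendsto_zero_iff_norm_tendsto_zero.mp hsum.tendsto_atTop_zero
      have heq : (fun m : ℕ => ‖c m * ((ρ : ℝ) : ℂ) ^ m‖)
          = fun m : ℕ => ‖q m‖ * (ρ : ℝ) ^ m := by
        funext m
        rw [norm_mul, norm_pow, hqnorm, Complex.norm_real, Real.norm_eq_abs,
          abs_of_nonneg ρ.coe_nonneg]
      rwa [heq] at h0
    · intro y hy
      have hy' : ‖y‖ < 1 := by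
        have h := mem_emetric_ball_zero_iff.mp hy
        rw [← ofReal_norm] at h
        exact ENNReal.ofReal_lt_one.mp h
      have := hF y hy'
      simp only [hqapp, zero_add]
      exact this
  -- Cauchy estimate for the coefficients
  have hcm : ∀ m, ‖c m‖ ≤ M := by
    intro m
    have key : ∀ r : ℝ, r ∈ Set.Ioo (0 : ℝ) 1 → ‖c m‖ * r ^ m ≤ M := by
      rintro r ⟨hr0, hr1⟩
      lift r to NNReal using hr0.le with R hR
      have hr0' : (0 : ℝ) < R := hr0
      have hdc : DifferentiableOn ℂ F (closedBall 0 (R : ℝ)) :=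
        hd.mono (closedBall_subset_ball (by exact_mod_cast hr1))
      have hp := hdc.hasFPowerSeriesOnBall (show 0 < R by exact_mod_cast hr0)
      have hpq : cauchyPowerSeries F 0 (R : ℝ) = q :=
        hp.hasFPowerSeriesAt.eq_formalMultilinearSeries hq.hasFPowerSeriesAt
      have hb := norm_cauchyPowerSeries_le F 0 (R : ℝ) m
      rw [hpq, hqnorm] at hb
      -- bound the circle integral by `2πM`
      have hcontF : Continuous fun θ : ℝ => ‖F (circleMap 0 (R : ℝ) θ)‖ := by
        refine (hd.continuousOn.comp_continuous (continuous_circleMap 0 (R : ℝ)) ?_).norm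
        intro θ
        rw [mem_ball_zero_iff]
        have : ‖circleMap 0 (R : ℝ) θ‖ = |(R : ℝ)| := norm_circleMap_zero _ _
        rw [this, abs_of_nonneg hr0.le]
        exact hr1
      have hint : (∫ θ : ℝ in (0 : ℝ)..2 * Real.pi, ‖F (circleMap 0 (R : ℝ) θ)‖)
          ≤ 2 * Real.pi * M := by
        have h1 := intervalIntegral.integral_mono_on (a := (0 : ℝ)) (b := 2 * Real.pi)
          (f := fun θ : ℝ => ‖F (circleMap 0 (R : ℝ) θ)‖) (g := fun _ => M)
          (le_of_lt Real.two_pi_pos) (hcontF.intervalIntegrable (μ := MeasureTheory.volume) 0 (2 * Real.pi)) intervalIntegrable_const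
          (fun θ _ => by
            refine hM _ ?_
            have : ‖circleMap 0 (R : ℝ) θ‖ = |(R : ℝ)| := norm_circleMap_zero _ _
            rw [this, abs_of_nonneg hr0.le]
            exact hr1)
        simpa [intervalIntegral.integral_const, smul_eq_mul, mul_comm] using h1
      have h2 : ‖c m‖ ≤ M * ((R : ℝ)⁻¹) ^ m := by
        refine hb.trans ?_
        rw [abs_of_nonneg hr0.le]
        refine mul_le_mul_of_nonneg_right ?_ (by positivity)
        calc (2 * Real.pi)⁻¹ * ∫ θ : ℝ in (0 : ℝ)..2 * Real.pi,
              ‖F (circleMap 0 (R : ℝ) θ)‖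
            ≤ (2 * Real.pi)⁻¹ * (2 * Real.pi * M) :=
              mul_le_mul_of_nonneg_left hint (by positivity)
          _ = M := by field_simp
      calc ‖c m‖ * (R : ℝ) ^ m ≤ M * ((R : ℝ)⁻¹) ^ m * (R : ℝ) ^ m :=
            mul_le_mul_of_nonneg_right h2 (by positivity)
        _ = M := by
            rw [inv_pow]
            field_simp
    have hlim : Tendsto (fun r : ℝ => ‖c m‖ * r ^ m) (nhdsWithin 1 (Set.Iio 1))
        (nhds (‖c m‖ * 1 ^ m)) :=
      ((continuous_const.mul (continuous_pow m)).tendsto 1).mono_left nhdsWithin_le_nhds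
    have hev : ∀ᶠ r in nhdsWithin (1 : ℝ) (Set.Iio 1), ‖c m‖ * r ^ m ≤ M := by
      filter_upwards [Ioo_mem_nhdsLT (show (0 : ℝ) < 1 by norm_num)] with r hr
      exact key r hr
    have := le_of_tendsto hlim hev
    simpa using this
  -- now sum up
  have hxlt : ‖((x : ℝ) : ℂ)‖ < 1 := by
    simpa [Complex.norm_real, abs_of_nonneg hx0] using hx1
  have h0 := hF ((x : ℝ) : ℂ) hxlt
  have hz : ∑ i ∈ Finset.range N, c i * ((x : ℝ) : ℂ) ^ i = 0 :=
    Finset.sum_eq_zero fun i hi => by rw [hc i (Finset.mem_range.1 hi), zero_mul]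
  have hshift : HasSum (fun m => c (m + N) * ((x : ℝ) : ℂ) ^ (m + N)) (F x) := by
    have h1 := (hasSum_nat_add_iff' (f := fun m => c m * ((x : ℝ) : ℂ) ^ m) N).mpr h0
    simpa [hz] using h1
  have hnorm_le : ∀ m : ℕ, ‖c (m + N) * ((x : ℝ) : ℂ) ^ (m + N)‖ ≤ M * x ^ N * x ^ m := by
    intro m
    rw [norm_mul, norm_pow]
    have hxn : ‖((x : ℝ) : ℂ)‖ = x := by
      rw [Complex.norm_real, Real.norm_eq_abs, abs_of_nonneg hx0]
    rw [hxn]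
    calc ‖c (m + N)‖ * x ^ (m + N) ≤ M * x ^ (m + N) :=
          mul_le_mul_of_nonneg_right (hcm _) (pow_nonneg hx0 _)
      _ = M * x ^ N * x ^ m := by rw [pow_add]; ring
  have hsummable : Summable fun m : ℕ => M * x ^ N * x ^ m :=
    (summable_geometric_of_lt_one hx0 hx1).mul_left _
  have hnormsum : Summable fun m : ℕ => ‖c (m + N) * ((x : ℝ) : ℂ) ^ (m + N)‖ :=
    Summable.of_nonneg_of_le (fun m => norm_nonneg _) hnorm_le hsummable
  calc ‖F ((x : ℝ) : ℂ)‖ = ‖∑' m : ℕ, c (m + N) * ((x : ℝ) : ℂ) ^ (m + N)‖ := by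
        rw [hshift.tsum_eq]
    _ ≤ ∑' m : ℕ, ‖c (m + N) * ((x : ℝ) : ℂ) ^ (m + N)‖ := norm_tsum_le_tsum_norm hnormsum
    _ ≤ ∑' m : ℕ, M * x ^ N * x ^ m := Summable.tsum_le_tsum hnorm_le hnormsum hsummable
    _ = M * x ^ N * (1 - x)⁻¹ := by
        rw [tsum_mul_left, tsum_geometric_of_lt_one hx0 hx1]
    _ = M * (x ^ N * (1 - x)⁻¹) := by ring

/-- Let `0 < s < t ≤ 1` and let `f` be continuous on the closed
polydisc `D_t ⊆ ℂⁿ`, holomorphic on its interior, with Taylor expansion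
`f(z) = Σ_i a_i z^i` at the origin (valid on the open polydisc).  If `a_i = 0` whenever
`|i| < N`, then `sup_{D_s} |f| ≤ (t−s)^{−n} (s/t)^N sup_{D_t} |f|`. -/
theorem stmt10 (n N : ℕ) (hn : 1 ≤ n) (s t : ℝ) (hs : 0 < s) (hst : s < t) (ht : t ≤ 1)
    (f : (Fin n → ℂ) → ℂ) (a : (Fin n → ℕ) → ℂ)
    (hcont : ContinuousOn f {z : Fin n → ℂ | ∀ k : Fin n, ‖z k‖ ≤ t})
    (hdiff : DifferentiableOn ℂ f {z : Fin n → ℂ | ∀ k : Fin n, ‖z k‖ < t})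
    (hexp : ∀ z : Fin n → ℂ, (∀ k : Fin n, ‖z k‖ < t) →
      HasSum (fun i : Fin n → ℕ => a i * ∏ k : Fin n, z k ^ i k) (f z))
    (hN : ∀ i : Fin n → ℕ, (∑ k : Fin n, i k) < N → a i = 0) :
    ∀ z : Fin n → ℂ, (∀ k : Fin n, ‖z k‖ ≤ s) →
      ‖f z‖ ≤
        ((t - s) ^ n)⁻¹ * (s / t) ^ N *
          ⨆ w ∈ {w : Fin n → ℂ | ∀ k : Fin n, ‖w k‖ ≤ t},
            ‖f w‖ := by
  intro z hz
  have ht0 : 0 < t := hs.trans hst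
  set M := ⨆ w ∈ {w : Fin n → ℂ | ∀ k : Fin n, ‖w k‖ ≤ t},
      ‖f w‖ with hMdef
  -- the polydisc is compact
  have hScompact : IsCompact {w : Fin n → ℂ | ∀ k : Fin n, ‖w k‖ ≤ t} := by
    have : {w : Fin n → ℂ | ∀ k : Fin n, ‖w k‖ ≤ t}
        = Set.pi Set.univ (fun _ : Fin n => closedBall (0 : ℂ) t) := by
      ext w
      simp [Set.mem_pi, mem_closedBall, Complex.dist_eq, sub_zero]
    rw [this]
    exact isCompact_univ_pi fun _ => isCompact_closedBall _ _
  have hbdd : BddAbove ((fun w => ‖f w‖) ''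
      {w : Fin n → ℂ | ∀ k : Fin n, ‖w k‖ ≤ t}) := by
    refine (hScompact.image_of_continuousOn ?_).bddAbove
    exact hcont.norm
  have hbR : BddAbove (Set.range fun w : Fin n → ℂ =>
      ⨆ _ : w ∈ {w : Fin n → ℂ | ∀ k : Fin n, ‖w k‖ ≤ t},
        ‖f w‖) := by
    obtain ⟨B, hB⟩ := hbdd
    refine ⟨max B 0, ?_⟩
    rintro y ⟨w, rfl⟩
    dsimp only
    by_cases h : w ∈ {w : Fin n → ℂ | ∀ k : Fin n, ‖w k‖ ≤ t}
    · rw [ciSup_pos h]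
      exact le_max_of_le_left (hB (Set.mem_image_of_mem _ h))
    · rw [ciSup_neg h, Real.sSup_empty]
      exact le_max_right _ _
  have hMle : ∀ w : Fin n → ℂ, (∀ k : Fin n, ‖w k‖ ≤ t) →
      ‖f w‖ ≤ M := by
    intro w hw
    rw [hMdef]
    have h1 : ‖f w‖
        = ⨆ _ : w ∈ {w : Fin n → ℂ | ∀ k : Fin n, ‖w k‖ ≤ t},
            ‖f w‖ :=
      (ciSup_pos (p := w ∈ {w : Fin n → ℂ | ∀ k : Fin n, ‖w k‖ ≤ t})
        (f := fun _ => ‖f w‖) hw).symm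
    rw [h1]
    exact le_ciSup hbR w
  have hM0 : 0 ≤ M :=
    le_trans (norm_nonneg _) (hMle (fun _ => 0) (fun _ => by simpa using ht0.le))
  -- rescale
  set w : Fin n → ℂ := fun k => ((t / s : ℝ) : ℂ) * z k with hwdef
  have hw : ∀ k, ‖w k‖ ≤ t := by
    intro k
    rw [hwdef]
    simp only [norm_mul, Complex.norm_real, Real.norm_eq_abs]
    rw [abs_of_nonneg (by positivity : (0 : ℝ) ≤ t / s)]
    calc t / s * ‖z k‖ ≤ t / s * s :=
          mul_le_mul_of_nonneg_left (hz k) (by positivity)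
      _ = t := by field_simp
  set F : ℂ → ℂ := fun y => f (fun k => y * w k) with hFdef
  have hmaps : ∀ y : ℂ, ‖y‖ < 1 → ∀ k, ‖y * w k‖ < t := by
    intro y hy k
    rw [norm_mul]
    calc ‖y‖ * ‖w k‖ ≤ ‖y‖ * t :=
          mul_le_mul_of_nonneg_left (hw k) (norm_nonneg _)
      _ < 1 * t := by
          refine mul_lt_mul_of_pos_right ?_ ht0
          exact hy
      _ = t := one_mul t
  have hFdiff : DifferentiableOn ℂ F (ball 0 1) := by
    have hg : Differentiable ℂ (fun y : ℂ => fun k : Fin n => y * w k) :=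
      differentiable_pi.mpr fun k => differentiable_id.mul_const _
    refine DifferentiableOn.comp hdiff hg.differentiableOn ?_
    intro y hy
    exact hmaps y (by rwa [mem_ball_zero_iff] at hy)
  have hMF : ∀ y : ℂ, ‖y‖ < 1 → ‖F y‖ ≤ M := by
    intro y hy
    exact hMle _ fun k => (hmaps y hy k).le
  -- the coefficients of the one-variable function
  set c : ℕ → ℂ := fun m => ∑ i ∈ Finset.Nat.antidiagonalTuple n m,
    (a i * ∏ k : Fin n, w k ^ i k) with hcdef
  have hcN : ∀ m, m < N → c m = 0 := by
    intro m hm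
    rw [hcdef]
    refine Finset.sum_eq_zero fun i hi => ?_
    rw [hN i (by rwa [Finset.Nat.mem_antidiagonalTuple.mp hi]), zero_mul]
  have hFsum : ∀ y : ℂ, ‖y‖ < 1 → HasSum (fun m => c m * y ^ m) (F y) := by
    intro y hy
    have h1 : HasSum (fun i : Fin n → ℕ => a i * ∏ k : Fin n, (y * w k) ^ i k) (F y) :=
      hexp _ (hmaps y hy)
    have h2 : (fun i : Fin n → ℕ => a i * ∏ k : Fin n, (y * w k) ^ i k)
        = fun i : Fin n → ℕ => (a i * ∏ k : Fin n, w k ^ i k) * y ^ (∑ k : Fin n, i k) := by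
      funext i
      simp only [mul_pow, Finset.prod_mul_distrib, Finset.prod_pow_eq_pow_sum]
      ring
    rw [h2] at h1
    have h3 : HasSum ((fun i : Fin n → ℕ =>
        (a i * ∏ k : Fin n, w k ^ i k) * y ^ (∑ k : Fin n, i k))
        ∘ (Equiv.sigmaFiberEquiv (fun i : Fin n → ℕ => ∑ k : Fin n, i k)))
        (F y) := (Equiv.hasSum_iff _).mpr h1
    refine HasSum.sigma h3 ?_
    intro m
    haveI : Fintype {i : Fin n → ℕ // (∑ k : Fin n, i k) = m} :=
      Fintype.subtype (Finset.Nat.antidiagonalTuple n m)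
        (fun i => Finset.Nat.mem_antidiagonalTuple)
    have h4 := hasSum_fintype (fun p : {i : Fin n → ℕ // (∑ k : Fin n, i k) = m} =>
      (a p.1 * ∏ k : Fin n, w k ^ p.1 k) * y ^ (∑ k : Fin n, p.1 k))
    have h5 : ∑ p : {i : Fin n → ℕ // (∑ k : Fin n, i k) = m},
        (a p.1 * ∏ k : Fin n, w k ^ p.1 k) * y ^ (∑ k : Fin n, p.1 k)
        = c m * y ^ m := by
      have h6 : c m = ∑ p : {i : Fin n → ℕ // (∑ k : Fin n, i k) = m},
          (a p.1 * ∏ k : Fin n, w k ^ p.1 k) := by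
        rw [hcdef]
        exact Finset.sum_subtype _ (fun i => Finset.Nat.mem_antidiagonalTuple) _
      rw [h6, Finset.sum_mul]
      refine Finset.sum_congr rfl fun p _ => ?_
      rw [p.2]
    rw [← h5]
    exact h4
  -- apply the one-variable lemma
  have hx0 : (0 : ℝ) ≤ s / t := by positivity
  have hx1 : s / t < 1 := (div_lt_one ht0).mpr hst
  have hkey := stmt10_onevar hFsum hFdiff hMF hcN hx0 hx1
  have hFz : F ((s / t : ℝ) : ℂ) = f z := by
    show f (fun k => ((s / t : ℝ) : ℂ) * w k) = f z
    refine congrArg f (funext fun k => ?_)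
    show ((s / t : ℝ) : ℂ) * (((t / s : ℝ) : ℂ) * z k) = z k
    rw [← mul_assoc, ← Complex.ofReal_mul, show s / t * (t / s) = 1 by field_simp]
    simp
  rw [hFz] at hkey
  refine hkey.trans ?_
  -- arithmetic: M * ((s/t)^N * (1 - s/t)⁻¹) ≤ ((t-s)^n)⁻¹ * (s/t)^N * M
  have hts : 0 < t - s := by linarith
  have h3 : (t - s) ^ n ≤ t - s := by
    calc (t - s) ^ n ≤ (t - s) ^ 1 :=
          pow_le_pow_of_le_one hts.le (by linarith) hn
      _ = t - s := pow_one _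
  have h4 : (1 - s / t)⁻¹ ≤ ((t - s) ^ n)⁻¹ := by
    have e : 1 - s / t = (t - s) / t := by field_simp
    rw [e, inv_div]
    calc t / (t - s) ≤ 1 / (t - s) := by
          exact (div_le_div_iff_of_pos_right hts).mpr ht
      _ = (t - s)⁻¹ := one_div _
      _ ≤ ((t - s) ^ n)⁻¹ := by
          apply inv_anti₀ (pow_pos hts n) h3
  calc M * ((s / t) ^ N * (1 - s / t)⁻¹)
      ≤ M * ((s / t) ^ N * ((t - s) ^ n)⁻¹) := by
        refine mul_le_mul_of_nonneg_left ?_ hM0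
        exact mul_le_mul_of_nonneg_left h4 (by positivity)
    _ = ((t - s) ^ n)⁻¹ * (s / t) ^ N * M := by ring
end
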